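/- arXiv:1609.03662 — 9 statements merged into one kernel-verified Lean document; each statement's English description precedes it below -/
import Mathlib

section
/- Let q be an odd prime power, r ≥ 1 with gcd(r, q-1) = 1, a ∈ F_{q^2}^*, and f(X) = X^r(a + X^{2(q-1)}). Let α be odd with 1 ≤ α ≤ q-2, set s = α + (q-1-α)q, and write (α+1)r - 2α = c(q+1) - d with 0 ≤ d < q+1. Then any integers i, j with 0 ≤ i ≤ α, 0 ≤ j ≤ q-1-α and 2(i-j) ≡ (α+1)r (mod q+1) satisfy 2(i-j) - (α+1)r ∈ {-c(q+1), -(c+1)(q+1)}. -/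
/-- With `(α+1)r - 2α = c(q+1) - d`, `0 ≤ d < q+1`, any `0 ≤ i ≤ α`, `0 ≤ j ≤ q-1-α`
with `2(i-j) ≡ (α+1)r (mod q+1)` satisfy `2(i-j) - (α+1)r ∈ {-c(q+1), -(c+1)(q+1)}`. -/
theorem surviving_terms
    (q r : ℤ) (hq : IsPrimePow q) (hqodd : Odd q)
    (hr : 1 ≤ r) (hgcd : Int.gcd r (q - 1) = 1)
    (α : ℤ) (hαodd : Odd α) (hα1 : 1 ≤ α) (hα2 : α ≤ q - 2)
    (c d : ℤ) (hd0 : 0 ≤ d) (hd1 : d < q + 1)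
    (hcd : (α + 1) * r - 2 * α = c * (q + 1) - d)
    (i j : ℤ) (hi0 : 0 ≤ i) (hi1 : i ≤ α) (hj0 : 0 ≤ j) (hj1 : j ≤ q - 1 - α)
    (hmod : (q + 1) ∣ (2 * (i - j) - (α + 1) * r)) :
    2 * (i - j) - (α + 1) * r = -(c * (q + 1)) ∨
      2 * (i - j) - (α + 1) * r = -((c + 1) * (q + 1)) := by
  obtain ⟨k, hk⟩ := hmod
  have hq3 : 3 ≤ q := by linarith
  have h1 : k + c ≤ 0 := by nlinarith
  have h2 : -1 ≤ k + c := by nlinarith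
  have hkc : k = -c ∨ k = -c - 1 := by omega
  rcases hkc with h | h
  · left; rw [hk, h]; ring
  · right; rw [hk, h]; ring
end

section
/- Let q be an odd prime power, r ≥ 1 with gcd(r,q-1)=1, and write (α+1)r - 2α = c(q+1) - d with 0 ≤ d < q+1 for an odd α with 1 ≤ α ≤ q-2. Then d = q-1 if and only if (r-2)(α+1) = (c-1)(q+1). Moreover, there exists an integer pair (α, c) with 1 ≤ α+1 ≤ q satisfying (r-2)(α+1) = (c-1)(q+1) if and only if gcd(r-2, q+1) > 1. -/
/-- `d = q-1` iff `(r-2)(α+1) = (c-1)(q+1)`; moreover such a pair `(α, c)` with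
`1 ≤ α+1 ≤ q` exists iff `gcd(r-2, q+1) > 1`. -/
theorem d_eq_q_sub_one_iff
    (q r : ℤ) (hq : IsPrimePow q) (hqodd : Odd q)
    (hr : 1 ≤ r) (hgcd : Int.gcd r (q - 1) = 1)
    (α : ℤ) (hαodd : Odd α) (hα1 : 1 ≤ α) (hα2 : α ≤ q - 2)
    (c d : ℤ) (hd0 : 0 ≤ d) (hd1 : d < q + 1)
    (hcd : (α + 1) * r - 2 * α = c * (q + 1) - d) :
    (d = q - 1 ↔ (r - 2) * (α + 1) = (c - 1) * (q + 1)) ∧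
    ((∃ α' c' : ℤ, 1 ≤ α' + 1 ∧ α' + 1 ≤ q ∧ (r - 2) * (α' + 1) = (c' - 1) * (q + 1)) ↔
      1 < Int.gcd (r - 2) (q + 1)) := by
  have hq3 : 3 ≤ q := by linarith
  constructor
  · constructor
    · intro h
      subst h
      linear_combination hcd
    · intro h
      linear_combination hcd - h
  · constructor
    · rintro ⟨α', c', h1, h2, h⟩
      by_contra hg
      push_neg at hg
      have hgne : Int.gcd (r - 2) (q + 1) ≠ 0 := by
        intro h0
        rw [Int.gcd_eq_zero_iff] at h0
        omega
      have hg1 : Int.gcd (r - 2) (q + 1) = 1 := by omega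
      have hco : IsCoprime (q + 1) (r - 2) := by
        rw [Int.isCoprime_iff_gcd_eq_one, Int.gcd_comm]
        exact hg1
      have hdvd : (q + 1) ∣ (r - 2) * (α' + 1) := ⟨c' - 1, by linear_combination h⟩
      have hdvd2 : (q + 1) ∣ (α' + 1) := hco.dvd_of_dvd_mul_left hdvd
      have := Int.le_of_dvd (by linarith) hdvd2
      linarith
    · intro hg
      set g : ℤ := (Int.gcd (r - 2) (q + 1) : ℤ) with hgdef
      have hg2 : (1 : ℤ) < g := by rw [hgdef]; exact_mod_cast hg
      obtain ⟨a, ha⟩ : g ∣ (q + 1) := Int.gcd_dvd_right (r - 2) (q + 1)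
      obtain ⟨b, hb⟩ : g ∣ (r - 2) := Int.gcd_dvd_left (r - 2) (q + 1)
      have ha1 : 1 ≤ a := by nlinarith
      refine ⟨a - 1, b + 1, by omega, by nlinarith, ?_⟩
      linear_combination a * hb - b * ha
end

section
/- Let q be a prime power, r ≥ 1, and a ∈ F_{q^2}^*. The polynomial g(X) = X^r(a + X^{q-1}) is a permutation polynomial of F_{q^2} if and only if gcd(r, q-1) = 1, (q+1) | (r-1), and a^{q+1} ≠ 1. -/
open Finset

/-- Telescoping identity. -/
private lemma telescope_aux {F : Type*} [CommRing F] (a u : F) (q : ℕ) :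
    (a + u) * ∑ j ∈ Finset.range (q+1), (-1:F)^j * a^(q-j) * u^j
      = a^(q+1) + (-1:F)^q * u^(q+1) := by
  induction q with
  | zero => simp
  | succ q ih =>
      rw [Finset.sum_range_succ]
      have hstep : ∀ j ∈ Finset.range (q+1), (-1:F)^j * a^(q+1-j) * u^j
          = a * ((-1:F)^j * a^(q-j) * u^j) := by
        intro j hj
        rw [Finset.mem_range] at hj
        have : q + 1 - j = (q - j) + 1 := by omega
        rw [this, pow_succ]
        ring
      rw [Finset.sum_congr rfl hstep, ← Finset.mul_sum]
      have expand : (a + u) * (a * ∑ j ∈ Finset.range (q+1), (-1:F)^j * a^(q-j) * u^j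
            + (-1:F)^(q+1) * a^(q+1-(q+1)) * u^(q+1))
          = a * ((a+u) * ∑ j ∈ Finset.range (q+1), (-1:F)^j * a^(q-j) * u^j)
            + (a+u) * ((-1:F)^(q+1) * u^(q+1)) := by
        simp only [Nat.sub_self, pow_zero]
        ring
      rw [expand, ih]
      ring

/-- Power sums over the image of powers of a root of unity. -/
private lemma sum_pow_aux {F : Type*} [Field F] [DecidableEq F] (n : ℕ) (ζ : F) (hord : orderOf ζ = n)
    (hn : 0 < n) (m : ℕ) :
    ∑ u ∈ (Finset.range n).image (fun i => ζ ^ i), u ^ m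
      = if n ∣ m then ((n : ℕ) : F) else 0 := by
  have hinj : ∀ x ∈ Finset.range n, ∀ y ∈ Finset.range n, ζ ^ x = ζ ^ y → x = y := by
    intro x hx y hy hxy
    rw [Finset.mem_range] at hx hy
    exact pow_injOn_Iio_orderOf (by simpa [hord] using hx) (by simpa [hord] using hy) hxy
  rw [Finset.sum_image hinj]
  have hζn : ζ ^ n = 1 := by rw [← hord]; exact pow_orderOf_eq_one ζ
  by_cases hdvd : n ∣ m
  · have h1 : ζ ^ m = 1 := by
      rw [← orderOf_dvd_iff_pow_eq_one, hord]; exact hdvd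
    simp only [if_pos hdvd]
    calc ∑ i ∈ Finset.range n, (ζ ^ i) ^ m = ∑ i ∈ Finset.range n, (1:F) := by
          apply Finset.sum_congr rfl; intro i _
          rw [pow_right_comm, h1, one_pow]
      _ = ((n:ℕ):F) := by simp
  · have h1 : ζ ^ m ≠ 1 := fun h => hdvd (hord ▸ orderOf_dvd_of_pow_eq_one h)
    simp only [if_neg hdvd]
    calc ∑ i ∈ Finset.range n, (ζ ^ i) ^ m = ∑ i ∈ Finset.range n, (ζ ^ m) ^ i := by
          apply Finset.sum_congr rfl; intro i _; rw [pow_right_comm]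
      _ = ((ζ ^ m) ^ n - 1) / (ζ ^ m - 1) := geom_sum_eq h1 n
      _ = 0 := by rw [pow_right_comm, hζn, one_pow, sub_self, zero_div]

/-- `g(X) = X^r (a + X^{q-1})` is a permutation polynomial of `F_{q²}` iff
`gcd(r, q-1) = 1`, `(q+1) ∣ (r-1)`, and `a^{q+1} ≠ 1`. -/
theorem perm_iff_t_eq_one
    (q r : ℕ) (hq : IsPrimePow q) (hr : 1 ≤ r)
    (F : Type*) [Field F] [Fintype F] (hF : Fintype.card F = q ^ 2)
    (a : F) (ha : a ≠ 0) :
    Function.Bijective (fun x : F => x ^ r * (a + x ^ (q - 1))) ↔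
      (Nat.gcd r (q - 1) = 1 ∧ (q + 1) ∣ (r - 1) ∧ a ^ (q + 1) ≠ 1) := by
  classical
  obtain ⟨p, n, hp, hn, hpq⟩ := hq
  rw [← Nat.prime_iff] at hp
  have hq2 : 2 ≤ q := by
    have : 2 ≤ p ^ n := le_trans hp.two_le (Nat.le_self_pow (by omega) p)
    omega
  have hfact : (q - 1) * (q + 1) = q ^ 2 - 1 := by
    obtain ⟨Q, rfl⟩ : ∃ Q, q = Q + 2 := ⟨q - 2, by omega⟩
    have h1 : (Q + 2) ^ 2 = Q * Q + 4 * Q + 4 := by ring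
    have h2 : (Q + 2 - 1) * (Q + 2 + 1) = Q * Q + 4 * Q + 3 := by
      have e : Q + 2 - 1 = Q + 1 := by omega
      rw [e]; ring
    omega
  -- characteristic facts
  have hqF : (q : F) = 0 := by
    have h1 : ((q ^ 2 : ℕ) : F) = 0 := by rw [← hF]; exact FiniteField.cast_card_eq_zero F
    push_cast at h1
    exact pow_eq_zero_iff (by norm_num) |>.mp h1
  have hpF : (p : F) = 0 := by
    have h1 : ((p : F)) ^ n = 0 := by
      rw [← Nat.cast_pow, hpq, hqF]
    exact pow_eq_zero_iff (by omega) |>.mp h1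
  haveI hfp : Fact p.Prime := ⟨hp⟩
  haveI hcharp : CharP F p := (CharP.charP_iff_prime_eq_zero hp).mpr hpF
  have hfrob : ∀ x y : F, (x + y) ^ q = x ^ q + y ^ q := by
    intro x y
    rw [← hpq]
    exact add_pow_char_pow x y p n
  have hm1q : (-1 : F) ^ q = -1 := by
    rcases Nat.even_or_odd q with he | ho
    · have hp2 : p = 2 := by
        rcases hp.eq_two_or_odd' with h | h
        · exact h
        · exact absurd (hpq ▸ h.pow) (Nat.not_odd_iff_even.mpr he)
      have h2 : (1 : F) + 1 = 0 := by
        have h3 : ((2 : ℕ) : F) = 0 := hp2 ▸ hpF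
        push_cast at h3
        linear_combination h3
      have hneg : (-1 : F) = 1 := by linear_combination -h2
      rw [hneg, one_pow]
    · exact ho.neg_one_pow
  have hm1q1 : (-1 : F) ^ (q + 1) = 1 := by rw [pow_succ, hm1q]; ring
  have hQ1 : ((q + 1 : ℕ) : F) = 1 := by push_cast [hqF]; ring
  have hcardsub : ∀ x : F, x ≠ 0 → x ^ (q ^ 2 - 1) = 1 := by
    intro x hx
    have := FiniteField.pow_card_sub_one_eq_one x hx
    rwa [hF] at this
  have hmu : ∀ x : F, x ≠ 0 → (x ^ (q - 1)) ^ (q + 1) = 1 := by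
    intro x hx
    rw [← pow_mul, hfact]
    exact hcardsub x hx
  -- generator of the unit group
  obtain ⟨g0, hg0⟩ := IsCyclic.exists_generator (α := Fˣ)
  have hg0ord : orderOf g0 = q ^ 2 - 1 := by
    rw [orderOf_eq_card_of_forall_mem_zpowers hg0, Nat.card_eq_fintype_card,
      Fintype.card_units, hF]
  have hg0pow : ∀ z : Fˣ, ∃ t : ℕ, g0 ^ t = z := by
    intro z
    exact (Submonoid.mem_powers_iff z g0).mp (mem_powers_iff_mem_zpowers.mpr (hg0 z))
  have hQpos : 0 < q ^ 2 - 1 := by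
    have : q ≤ q ^ 2 := Nat.le_self_pow (by omega) q
    omega
  -- surjectivity of x ↦ x^(q-1) onto (q+1)-th roots of unity
  have key_surj : ∀ z : Fˣ, z ^ (q + 1) = 1 → ∃ x : Fˣ, x ^ (q - 1) = z := by
    intro z hz
    obtain ⟨t, ht⟩ := hg0pow z
    have h1 : g0 ^ (t * (q + 1)) = 1 := by rw [pow_mul, ht, hz]
    have h2 : (q ^ 2 - 1) ∣ t * (q + 1) := hg0ord ▸ orderOf_dvd_of_pow_eq_one h1
    rw [← hfact] at h2
    have h3 : (q - 1) ∣ t := (Nat.mul_dvd_mul_iff_right (by omega : 0 < q + 1)).mp h2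
    obtain ⟨s, hs⟩ := h3
    exact ⟨g0 ^ s, by rw [← pow_mul, mul_comm s (q-1), ← hs, ht]⟩
  -- primitive (q+1)-th root of unity
  set ζ : Fˣ := g0 ^ (q - 1) with hζdef
  have hζord : orderOf ζ = q + 1 := by
    rw [hζdef, orderOf_pow, hg0ord, ← hfact, Nat.gcd_eq_right ⟨q+1, by ring⟩,
      Nat.mul_div_cancel_left _ (by omega : 0 < q - 1)]
  set ζF : F := ((ζ : Fˣ) : F) with hζFdef
  have hζFord : orderOf ζF = q + 1 := by rw [hζFdef, orderOf_units, hζord]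
  set μF : Finset F := (Finset.range (q + 1)).image (fun i => ζF ^ i) with hμdef
  have hμmem : ∀ u : F, u ∈ μF ↔ u ^ (q + 1) = 1 := by
    intro u
    constructor
    · rintro hu
      rw [hμdef, Finset.mem_image] at hu
      obtain ⟨i, _, rfl⟩ := hu
      rw [pow_right_comm, ← hζFord, pow_orderOf_eq_one, one_pow]
    · intro hu
      have hu0 : u ≠ 0 := by
        intro h; rw [h, zero_pow (by omega)] at hu; exact zero_ne_one hu
      set w : Fˣ := Units.mk0 u hu0 with hwdef
      have hw : w ^ (q + 1) = 1 := by
        apply Units.ext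
        rw [Units.val_pow_eq_pow_val]
        exact hu
      obtain ⟨t, ht⟩ := hg0pow w
      have h1 : g0 ^ (t * (q + 1)) = 1 := by rw [pow_mul, ht, hw]
      have h2 : (q ^ 2 - 1) ∣ t * (q + 1) := hg0ord ▸ orderOf_dvd_of_pow_eq_one h1
      rw [← hfact] at h2
      obtain ⟨s, hs⟩ := (Nat.mul_dvd_mul_iff_right (by omega : 0 < q + 1)).mp h2
      have hws : ζ ^ s = w := by rw [hζdef, ← pow_mul, ← hs, ht]
      rw [hμdef, Finset.mem_image]
      refine ⟨s % (q + 1), Finset.mem_range.mpr (Nat.mod_lt _ (by omega)), ?_⟩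
      have : ζF ^ (s % (q + 1)) = ζF ^ s := by rw [← hζFord]; exact pow_mod_orderOf ζF s
      rw [this, hζFdef, ← Units.val_pow_eq_pow_val, hws]
      rfl
  have hμsum : ∀ m : ℕ, ∑ u ∈ μF, u ^ m = if (q + 1) ∣ m then 1 else 0 := by
    intro m
    rw [hμdef, sum_pow_aux (q+1) ζF hζFord (by omega) m]
    by_cases h : (q + 1) ∣ m <;> simp [h, hQ1]
  have hmem0 : a ^ (q + 1) ≠ 1 → ∀ u : F, u ^ (q + 1) = 1 → a + u ≠ 0 := by
    intro hN u hu heq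
    have hu' : u = -a := by linear_combination heq
    rw [hu', neg_pow, hm1q1, one_mul] at hu
    exact hN hu
  have hgne : a ^ (q + 1) ≠ 1 → ∀ x : F, x ≠ 0 → x ^ r * (a + x ^ (q - 1)) ≠ 0 :=
    fun hN x hx => mul_ne_zero (pow_ne_zero r hx) (hmem0 hN _ (hmu x hx))
  have hqq0 : q - 1 + 1 = q := by omega
  have powq0 : ∀ w : F, w ^ (q - 1) * w = w ^ q := by
    intro w; rw [← pow_succ, hqq0]
  constructor
  · intro hbij
    have hinj := hbij.injective
    -- Part 1 : a^(q+1) ≠ 1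
    have hN : a ^ (q + 1) ≠ 1 := by
      intro hN1
      have hna : (-a) ^ (q + 1) = 1 := by
        rw [neg_pow, hm1q1, one_mul]; exact hN1
      have hna0 : (-a) ≠ 0 := neg_ne_zero.mpr ha
      have hw : (Units.mk0 (-a) hna0) ^ (q + 1) = 1 :=
        Units.ext (by rw [Units.val_pow_eq_pow_val]; exact hna)
      obtain ⟨xu, hxu⟩ := key_surj _ hw
      have hxF : ((xu : F)) ^ (q - 1) = -a := by
        rw [← Units.val_pow_eq_pow_val, hxu]; rfl
      have hcol : ((xu : F)) ^ r * (a + ((xu : F)) ^ (q - 1))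
          = (0:F) ^ r * (a + (0:F) ^ (q - 1)) := by
        rw [hxF, zero_pow (by omega : r ≠ 0), zero_pow (by omega : q - 1 ≠ 0)]
        ring
      exact Units.ne_zero xu (hinj hcol)
    -- Part 2 : gcd(r, q-1) = 1
    have hgcd : Nat.gcd r (q - 1) = 1 := by
      by_contra hd
      set d := Nat.gcd r (q - 1) with hddef
      have hdpos : 0 < d := Nat.gcd_pos_of_pos_left _ (by omega)
      have hd2 : 2 ≤ d := by omega
      have hdr : d ∣ r := Nat.gcd_dvd_left _ _
      have hdq : d ∣ (q - 1) := Nat.gcd_dvd_right _ _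
      have hdQ : d ∣ (q ^ 2 - 1) := hdq.trans ⟨q + 1, hfact.symm⟩
      obtain ⟨f, hf⟩ := hdQ
      have hfpos : 0 < f := by
        rcases Nat.eq_zero_or_pos f with h | h
        · rw [h, mul_zero] at hf; omega
        · exact h
      have h2f : 2 * f ≤ d * f := Nat.mul_le_mul_right f hd2
      have hcne : g0 ^ f ≠ 1 := by
        intro h
        have hdvd : orderOf g0 ∣ f := orderOf_dvd_of_pow_eq_one h
        rw [hg0ord] at hdvd
        have := Nat.le_of_dvd hfpos hdvd
        omega
      have hcq : (g0 ^ f) ^ (q - 1) = 1 := by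
        obtain ⟨e, he⟩ := hdq
        have hexp : f * (q - 1) = (q ^ 2 - 1) * e := by rw [hf, he]; ring
        rw [← pow_mul, hexp, pow_mul, ← hg0ord, pow_orderOf_eq_one, one_pow]
      have hcr : (g0 ^ f) ^ r = 1 := by
        obtain ⟨e, he⟩ := hdr
        have hexp : f * r = (q ^ 2 - 1) * e := by rw [hf, he]; ring
        rw [← pow_mul, hexp, pow_mul, ← hg0ord, pow_orderOf_eq_one, one_pow]
      have hcol : (((g0 ^ f : Fˣ) : F)) ^ r * (a + ((g0 ^ f : Fˣ) : F) ^ (q - 1))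
          = (1:F) ^ r * (a + (1:F) ^ (q - 1)) := by
        have e1 : (((g0 ^ f : Fˣ) : F)) ^ r = 1 := by
          rw [← Units.val_pow_eq_pow_val, hcr]; rfl
        have e2 : (((g0 ^ f : Fˣ) : F)) ^ (q - 1) = 1 := by
          rw [← Units.val_pow_eq_pow_val, hcq]; rfl
        rw [e1, e2, one_pow, one_pow]
      exact hcne (Units.val_eq_one.mp (hinj hcol))
    refine ⟨hgcd, ?_, hN⟩
    -- Part 3 : (q+1) ∣ (r-1)
    by_contra hndvd
    obtain ⟨s, hs⟩ : ∃ s, r = s + 1 := ⟨r - 1, by omega⟩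
    have hndvd' : ¬ (q + 1) ∣ s := by
      intro h; exact hndvd (by rwa [hs, Nat.add_sub_cancel])
    set k := s % (q + 1) with hkdef
    have hk1 : 1 ≤ k := by
      rcases Nat.eq_zero_or_pos k with h | h
      · exact absurd (Nat.dvd_of_mod_eq_zero (hkdef.symm.trans h)) hndvd'
      · exact h
    have hklt : k < q + 1 := Nat.mod_lt s (by omega)
    have hk2 : k ≤ q := by omega
    have hdm : (q + 1) * (s / (q + 1)) + k = s := Nat.div_add_mod s (q + 1)
    have hchar1 : ∀ j, j < q + 1 → ((q + 1) ∣ (s + 1 + j) ↔ j = q - k) := by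
      intro j hj
      constructor
      · intro hdvd
        have hdvd2 : (q + 1) ∣ (k + 1 + j) := by
          have hrw : s + 1 + j = (q + 1) * (s / (q + 1)) + (k + 1 + j) := by omega
          rw [hrw] at hdvd
          exact (Nat.dvd_add_right ⟨_, rfl⟩).mp hdvd
        obtain ⟨c, hc⟩ := hdvd2
        have hcb : (q + 1) * c < (q + 1) * 2 := by omega
        have hclt : c < 2 := Nat.lt_of_mul_lt_mul_left hcb
        have hc0 : c ≠ 0 := by rintro rfl; omega
        have hc1 : c = 1 := by omega
        subst hc1
        omega
      · rintro rfl
        have hexp : (q + 1) * (s / (q + 1) + 1) = (q + 1) * (s / (q + 1)) + (q + 1) := by ring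
        exact ⟨s / (q + 1) + 1, by omega⟩
    have hchar2 : ∀ j, j < q + 1 → ((q + 1) ∣ (s + j) ↔ j = q + 1 - k) := by
      intro j hj
      constructor
      · intro hdvd
        have hdvd2 : (q + 1) ∣ (k + j) := by
          have hrw : s + j = (q + 1) * (s / (q + 1)) + (k + j) := by omega
          rw [hrw] at hdvd
          exact (Nat.dvd_add_right ⟨_, rfl⟩).mp hdvd
        obtain ⟨c, hc⟩ := hdvd2
        have hcb : (q + 1) * c < (q + 1) * 2 := by omega
        have hclt : c < 2 := Nat.lt_of_mul_lt_mul_left hcb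
        have hc0 : c ≠ 0 := by rintro rfl; omega
        have hc1 : c = 1 := by omega
        subst hc1
        omega
      · rintro rfl
        have hexp : (q + 1) * (s / (q + 1) + 1) = (q + 1) * (s / (q + 1)) + (q + 1) := by ring
        exact ⟨s / (q + 1) + 1, by omega⟩
    -- the map u ↦ u^r (a+u)^(q-1) permutes μF
    have hmaps : ∀ u ∈ μF, u ^ r * (a + u) ^ (q - 1) ∈ μF := by
      intro u hu
      rw [hμmem] at hu ⊢
      have hau : a + u ≠ 0 := hmem0 hN u hu
      calc (u ^ r * (a + u) ^ (q - 1)) ^ (q + 1)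
          = (u ^ (q + 1)) ^ r * (a + u) ^ ((q - 1) * (q + 1)) := by
            rw [mul_pow, pow_right_comm u r, ← pow_mul (a + u) (q - 1) (q + 1)]
        _ = 1 := by rw [hu, one_pow, one_mul, hfact, hcardsub _ hau]
    have hsurj : ∀ w ∈ μF, ∃ u, ∃ _ : u ∈ μF, u ^ r * (a + u) ^ (q - 1) = w := by
      intro w hw
      rw [hμmem] at hw
      have hw0 : w ≠ 0 := by
        intro h; rw [h, zero_pow (by omega : q + 1 ≠ 0)] at hw; exact zero_ne_one hw
      obtain ⟨zu, hzu⟩ := key_surj (Units.mk0 w hw0)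
        (Units.ext (by rw [Units.val_pow_eq_pow_val]; exact hw))
      obtain ⟨x, hx⟩ := hbij.surjective (zu : F)
      simp only at hx
      have hx0 : x ≠ 0 := by
        intro h
        rw [h, zero_pow (by omega : r ≠ 0), zero_mul] at hx
        exact (Units.ne_zero zu) hx.symm
      refine ⟨x ^ (q - 1), (hμmem _).mpr (hmu x hx0), ?_⟩
      have hrc : (x ^ (q - 1)) ^ r * (a + x ^ (q - 1)) ^ (q - 1)
          = (x ^ r * (a + x ^ (q - 1))) ^ (q - 1) := by
        rw [mul_pow, pow_right_comm]
      rw [hrc, hx, ← Units.val_pow_eq_pow_val, hzu]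
      rfl
    have hsum0 : ∑ u ∈ μF, u ^ r * (a + u) ^ (q - 1) = 0 := by
      have hinjOn : Set.InjOn (fun u : F => u ^ r * (a + u) ^ (q - 1)) ↑μF := by
        have hi := Finset.inj_on_of_surj_on_of_card_le (s := μF) (t := μF)
          (fun u _ => u ^ r * (a + u) ^ (q - 1)) (fun u hu => hmaps u hu)
          (fun w hw => hsurj w hw) le_rfl
        intro x hx y hy hxy
        exact hi (Finset.mem_coe.mp hx) (Finset.mem_coe.mp hy) hxy
      have hsurjOn : Set.SurjOn (fun u : F => u ^ r * (a + u) ^ (q - 1)) ↑μF ↑μF := by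
        intro w hw
        obtain ⟨u, hu, hfu⟩ := hsurj w (Finset.mem_coe.mp hw)
        exact ⟨u, Finset.mem_coe.mpr hu, hfu⟩
      have hb : ∑ u ∈ μF, u ^ r * (a + u) ^ (q - 1) = ∑ w ∈ μF, w :=
        Finset.sum_nbij (fun u => u ^ r * (a + u) ^ (q - 1)) hmaps hinjOn hsurjOn
          (fun _ _ => rfl)
      have h1' : ∑ w ∈ μF, w = ∑ w ∈ μF, w ^ 1 := by simp
      rw [hb, h1', hμsum 1, if_neg]
      intro hdvd
      have := Nat.le_of_dvd one_pos hdvd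
      omega
    -- per-term expansion
    have hterm : ∀ u ∈ μF, (a ^ (q + 1) - 1) * (u ^ r * (a + u) ^ (q - 1))
        = ∑ j ∈ Finset.range (q + 1),
            ((-1:F) ^ j * a ^ (q - j) * a ^ q * u ^ (s + 1 + j)
              + (-1:F) ^ j * a ^ (q - j) * u ^ (s + j)) := by
      intro u hu
      rw [hμmem] at hu
      have htel : (a + u) * ∑ j ∈ Finset.range (q + 1), (-1:F) ^ j * a ^ (q - j) * u ^ j
          = a ^ (q + 1) - 1 := by
        rw [telescope_aux, hm1q, hu]; ring
      have hfu : (u ^ r * (a + u) ^ (q - 1)) * (a + u) = u ^ s * (a ^ q * u + 1) := by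
        calc (u ^ r * (a + u) ^ (q - 1)) * (a + u) = u ^ r * (a + u) ^ q := by
              rw [mul_assoc, powq0 (a + u)]
          _ = u ^ r * (a ^ q + u ^ q) := by rw [hfrob]
          _ = u ^ s * (a ^ q * u + 1) := by
              rw [hs]; linear_combination u ^ s * hu
      calc (a ^ (q + 1) - 1) * (u ^ r * (a + u) ^ (q - 1))
          = ((a + u) * ∑ j ∈ Finset.range (q + 1), (-1:F) ^ j * a ^ (q - j) * u ^ j)
              * (u ^ r * (a + u) ^ (q - 1)) := by rw [htel]
        _ = (∑ j ∈ Finset.range (q + 1), (-1:F) ^ j * a ^ (q - j) * u ^ j)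
              * ((u ^ r * (a + u) ^ (q - 1)) * (a + u)) := by ring
        _ = (∑ j ∈ Finset.range (q + 1), (-1:F) ^ j * a ^ (q - j) * u ^ j)
              * (u ^ s * (a ^ q * u + 1)) := by rw [hfu]
        _ = ∑ j ∈ Finset.range (q + 1),
              ((-1:F) ^ j * a ^ (q - j) * u ^ j) * (u ^ s * (a ^ q * u + 1)) :=
            Finset.sum_mul _ _ _
        _ = ∑ j ∈ Finset.range (q + 1),
              ((-1:F) ^ j * a ^ (q - j) * a ^ q * u ^ (s + 1 + j)
                + (-1:F) ^ j * a ^ (q - j) * u ^ (s + j)) := by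
            apply Finset.sum_congr rfl
            intro j _
            ring
    -- main identity
    have hmain : (0:F) = ∑ j ∈ Finset.range (q + 1),
          (((-1:F) ^ j * a ^ (q - j) * a ^ q) * (if (q + 1) ∣ (s + 1 + j) then (1:F) else 0))
        + ∑ j ∈ Finset.range (q + 1),
          (((-1:F) ^ j * a ^ (q - j)) * (if (q + 1) ∣ (s + j) then (1:F) else 0)) := by
      rw [← Finset.sum_add_distrib]
      calc (0:F) = (a ^ (q + 1) - 1) * ∑ u ∈ μF, u ^ r * (a + u) ^ (q - 1) := by
            rw [hsum0, mul_zero]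
        _ = ∑ u ∈ μF, (a ^ (q + 1) - 1) * (u ^ r * (a + u) ^ (q - 1)) :=
            Finset.mul_sum _ _ _
        _ = ∑ u ∈ μF, ∑ j ∈ Finset.range (q + 1),
              ((-1:F) ^ j * a ^ (q - j) * a ^ q * u ^ (s + 1 + j)
                + (-1:F) ^ j * a ^ (q - j) * u ^ (s + j)) := Finset.sum_congr rfl hterm
        _ = ∑ j ∈ Finset.range (q + 1), ∑ u ∈ μF,
              ((-1:F) ^ j * a ^ (q - j) * a ^ q * u ^ (s + 1 + j)
                + (-1:F) ^ j * a ^ (q - j) * u ^ (s + j)) := Finset.sum_comm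
        _ = ∑ j ∈ Finset.range (q + 1),
              (((-1:F) ^ j * a ^ (q - j) * a ^ q) * (if (q + 1) ∣ (s + 1 + j) then (1:F) else 0)
                + ((-1:F) ^ j * a ^ (q - j)) * (if (q + 1) ∣ (s + j) then (1:F) else 0)) := by
            apply Finset.sum_congr rfl
            intro j _
            rw [Finset.sum_add_distrib, ← Finset.mul_sum, ← Finset.mul_sum,
              hμsum (s + 1 + j), hμsum (s + j)]
    have hT1 : ∑ j ∈ Finset.range (q + 1),
          (((-1:F) ^ j * a ^ (q - j) * a ^ q) * (if (q + 1) ∣ (s + 1 + j) then (1:F) else 0))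
        = (-1:F) ^ (q - k) * a ^ k * a ^ q := by
      rw [Finset.sum_eq_single (q - k)]
      · rw [if_pos ((hchar1 (q - k) (by omega)).mpr rfl), mul_one,
          show q - (q - k) = k from by omega]
      · intro j hj hne
        rw [Finset.mem_range] at hj
        rw [if_neg (fun hdvd => hne ((hchar1 j hj).mp hdvd)), mul_zero]
      · intro h
        exact absurd (Finset.mem_range.mpr (by omega)) h
    have hT2 : ∑ j ∈ Finset.range (q + 1),
          (((-1:F) ^ j * a ^ (q - j)) * (if (q + 1) ∣ (s + j) then (1:F) else 0))
        = (-1:F) ^ (q + 1 - k) * a ^ (k - 1) := by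
      rw [Finset.sum_eq_single (q + 1 - k)]
      · rw [if_pos ((hchar2 (q + 1 - k) (by omega)).mpr rfl), mul_one,
          show q - (q + 1 - k) = k - 1 from by omega]
      · intro j hj hne
        rw [Finset.mem_range] at hj
        rw [if_neg (fun hdvd => hne ((hchar2 j hj).mp hdvd)), mul_zero]
      · intro h
        exact absurd (Finset.mem_range.mpr (by omega)) h
    rw [hT1, hT2, show q + 1 - k = (q - k) + 1 from by omega, pow_succ] at hmain
    set E := (-1:F) ^ (q - k) with hEdef
    have hE2 : E * E = 1 := by rw [hEdef, ← mul_pow]; norm_num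
    obtain ⟨κ, hκ⟩ : ∃ κ, k = κ + 1 := ⟨k - 1, by omega⟩
    rw [hκ, show κ + 1 - 1 = κ from by omega] at hmain
    have hfin : a ^ κ * (a ^ (q + 1) - 1) = 0 := by
      linear_combination (-E) * hmain - (a ^ κ * a * a ^ q - a ^ κ) * hE2
    rcases mul_eq_zero.mp hfin with h | h
    · exact pow_ne_zero κ ha h
    · exact hN (by linear_combination h)
  · rintro ⟨h1, h2, h3⟩
    rw [← Finite.injective_iff_bijective]
    intro x y hxy
    simp only at hxy
    by_cases hx0 : x = 0
    · subst hx0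
      by_contra hne
      have hy0 : y ≠ 0 := fun h => hne h.symm
      have h0 : (0:F) ^ r * (a + 0 ^ (q - 1)) = 0 := by
        rw [zero_pow (by omega)]; ring
      rw [h0] at hxy
      exact hgne h3 y hy0 hxy.symm
    by_cases hy0 : y = 0
    · subst hy0
      by_contra hne
      have h0 : (0:F) ^ r * (a + 0 ^ (q - 1)) = 0 := by
        rw [zero_pow (by omega)]; ring
      rw [h0] at hxy
      exact hgne h3 x hx0 hxy
    · set u := x ^ (q - 1) with hudef
      set v := y ^ (q - 1) with hvdef
      have hu : u ^ (q + 1) = 1 := hmu x hx0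
      have hv : v ^ (q + 1) = 1 := hmu y hy0
      have hau : a + u ≠ 0 := hmem0 h3 _ hu
      have hav : a + v ≠ 0 := hmem0 h3 _ hv
      have step1 : u ^ r * (a + u) ^ (q - 1) = v ^ r * (a + v) ^ (q - 1) := by
        have h := congrArg (fun z : F => z ^ (q - 1)) hxy
        simp only [mul_pow] at h
        rw [pow_right_comm x r, pow_right_comm y r] at h
        exact h
      obtain ⟨m, hm⟩ := h2
      obtain ⟨s, hs⟩ : ∃ s, r = s + 1 := ⟨r - 1, by omega⟩
      have hsm : s = (q + 1) * m := by omega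
      have powr : ∀ w : F, w ^ (q + 1) = 1 → w ^ r = w := by
        intro w hw
        rw [hs, pow_succ, hsm, pow_mul, hw, one_pow, one_mul]
      rw [powr _ hu, powr _ hv] at step1
      have hqq : q - 1 + 1 = q := by omega
      have powq : ∀ w : F, w ^ (q - 1) * w = w ^ q := by
        intro w; rw [← pow_succ, hqq]
      have eq1 : u * (a + u) ^ q * (a + v) = v * (a + v) ^ q * (a + u) := by
        calc u * (a + u) ^ q * (a + v)
            = (u * (a + u) ^ (q - 1)) * ((a + u) * (a + v)) := by
              rw [← powq (a + u)]; ring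
          _ = (v * (a + v) ^ (q - 1)) * ((a + u) * (a + v)) := by rw [step1]
          _ = v * (a + v) ^ q * (a + u) := by
              rw [← powq (a + v)]; ring
      rw [hfrob a u, hfrob a v] at eq1
      have huq : u ^ q * u = 1 := by rw [← pow_succ]; exact hu
      have hvq : v ^ q * v = 1 := by rw [← pow_succ]; exact hv
      have key : (a ^ q * a - 1) * (u - v) = 0 := by
        linear_combination eq1 - (a + v) * huq + (a + u) * hvq
      have hN' : a ^ q * a - 1 ≠ 0 := by
        intro h
        apply h3
        rw [pow_succ]
        linear_combination h
      have huv : u = v := by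
        rcases mul_eq_zero.mp key with h | h
        · exact absurd h hN'
        · linear_combination h
      rw [huv] at hxy hau
      have hxr : x ^ r = y ^ r := mul_right_cancel₀ hau hxy
      have hv0 : v ≠ 0 := pow_ne_zero _ hy0
      have hcr : (x / y) ^ r = 1 := by
        rw [div_pow, hxr, div_self (pow_ne_zero r hy0)]
      have hcq : (x / y) ^ (q - 1) = 1 := by
        rw [div_pow, ← hudef, ← hvdef, huv, div_self hv0]
      have hord : orderOf (x / y) = 1 := by
        have d1 : orderOf (x / y) ∣ r := orderOf_dvd_of_pow_eq_one hcr
        have d2 : orderOf (x / y) ∣ (q - 1) := orderOf_dvd_of_pow_eq_one hcq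
        have d3 := Nat.dvd_gcd d1 d2
        rw [h1] at d3
        exact Nat.dvd_one.mp d3
      exact (div_eq_one_iff_eq hy0).mp (orderOf_eq_one_iff.mp hord)
end

section
/- Let q be a prime power, r ≥ 1 with gcd(r,q-1)=1 and (q+1) | (r-1), and a ∈ F_{q^2}^* with a^{q+1} ≠ 1. Then for every integer s with 1 ≤ s ≤ q^2 - 2, the power sum ∑_{x ∈ F_{q^2}} (x^r(a + x^{q-1}))^s equals 0. -/
open Finset

/-- If `gcd(r, q-1) = 1`, `(q+1) ∣ (r-1)` and `a^{q+1} ≠ 1`, then all power sums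
`∑_{x ∈ F_{q²}} (x^r (a + x^{q-1}))^s` with `1 ≤ s ≤ q² - 2` vanish. -/
theorem power_sums_vanish_t_eq_one
    (q r : ℕ) (hq : IsPrimePow q) (hr : 1 ≤ r)
    (hgcd : Nat.gcd r (q - 1) = 1) (hdvd : (q + 1) ∣ (r - 1))
    (F : Type*) [Field F] [Fintype F] (hF : Fintype.card F = q ^ 2)
    (a : F) (ha : a ≠ 0) (ha1 : a ^ (q + 1) ≠ 1) :
    ∀ s : ℕ, 1 ≤ s → s ≤ q ^ 2 - 2 →
      ∑ x : F, (x ^ r * (a + x ^ (q - 1))) ^ s = 0 := by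
  classical
  intro s hs1 hs2
  obtain ⟨p, n, hp, hn, hqpn⟩ := hq
  have hp' : Nat.Prime p := Nat.prime_iff.mpr hp
  have hq2 : 2 ≤ q := by
    calc 2 ≤ p := hp'.two_le
    _ ≤ p ^ n := Nat.le_self_pow (by omega) p
    _ = q := hqpn
  have hq1 : 1 ≤ q := by omega
  have hq2pos : 1 ≤ q ^ 2 := Nat.one_le_pow _ _ (by omega)
  have hfactor : (q - 1) * (q + 1) = q ^ 2 - 1 := by
    zify [hq1, hq2pos]; ring
  -- characteristic facts
  have hcast : ((q : F)) = 0 := by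
    have h0 : ((Fintype.card F : ℕ) : F) = 0 := FiniteField.cast_card_eq_zero F
    rw [hF] at h0
    push_cast at h0
    exact pow_eq_zero_iff (two_ne_zero) |>.mp h0
  have hring : ringChar F = p := by
    have h1 : ringChar F ∣ q := (ringChar.spec F q).mp hcast
    have h2 : Nat.Prime (ringChar F) := by
      haveI := ringChar.charP F
      exact CharP.char_is_prime F (ringChar F)
    rw [← hqpn] at h1
    exact (Nat.prime_dvd_prime_iff_eq h2 hp').mp (h2.dvd_of_dvd_pow h1)
  haveI : Fact (Nat.Prime p) := ⟨hp'⟩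
  haveI hCharP : CharP F p := hring ▸ ringChar.charP F
  have frob : ∀ x y : F, (x + y) ^ q = x ^ q + y ^ q := by
    intro x y
    rw [← hqpn]
    exact add_pow_char_pow x y p n
  have hpowcard : ∀ x : F, x ^ (q * q) = x := by
    intro x
    have h := FiniteField.pow_card x
    rwa [hF, show q ^ 2 = q * q by ring] at h
  have hcardu : Fintype.card Fˣ = q ^ 2 - 1 := by rw [Fintype.card_units, hF]
  -- reduce to sum over units
  set G : F → F := fun x => (x ^ r * (a + x ^ (q - 1))) ^ s with hG
  show ∑ x : F, G x = 0
  have hG0 : G 0 = 0 := by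
    simp only [hG]
    rw [zero_pow (by omega : r ≠ 0), zero_mul, zero_pow (by omega : s ≠ 0)]
  have hsum_units : ∑ x : F, G x = ∑ x : Fˣ, G (x : F) := by
    let e : Fˣ ↪ F := ⟨fun x => x, fun _ _ h => Units.ext h⟩
    have hmap : univ.map e = univ \ {0} := by
      ext x
      simp only [mem_map, mem_univ, Function.Embedding.coeFn_mk, true_and, mem_sdiff,
        mem_singleton, e]
      exact isUnit_iff_ne_zero (a := x)
    calc ∑ x : F, G x = ∑ x ∈ univ \ {(0 : F)}, G x := by
          rw [← sum_sdiff (subset_univ {(0 : F)}), sum_singleton, hG0, add_zero]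
      _ = ∑ x : Fˣ, G (x : F) := by
          rw [← hmap, sum_map]
          rfl
  by_cases hdvds : (q - 1) ∣ s
  · -- main case : s = (q-1)*k
    obtain ⟨k, hk⟩ := hdvds
    have hk1 : 1 ≤ k := by
      rcases Nat.eq_zero_or_pos k with h | h
      · rw [h, mul_zero] at hk; omega
      · exact h
    have hkq : k ≤ q := by
      by_contra hcon
      push_neg at hcon
      have h1 : (q - 1) * (q + 1) ≤ (q - 1) * k := Nat.mul_le_mul_left _ (by omega)
      rw [hfactor, ← hk] at h1
      have h4 : 2 ^ 2 ≤ q ^ 2 := Nat.pow_le_pow_left hq2 2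
      obtain ⟨M, hM⟩ : ∃ M, q ^ 2 = M := ⟨_, rfl⟩
      rw [hM] at h1 h4 hs2
      omega
    obtain ⟨m, hm⟩ := hdvd
    have hrm : r = (q + 1) * m + 1 := by rw [← hm, Nat.sub_add_cancel hr]
    -- nonvanishing facts
    have hm1 : (-1 : F) ^ (q + 1) = 1 := by
      rcases eq_or_ne p 2 with hp2 | hp2
      · haveI : CharP F 2 := by rwa [hp2] at hCharP
        rw [CharTwo.neg_eq (1 : F), one_pow]
      · have hqodd : Odd q := by
          rw [← hqpn]; exact (hp'.odd_of_ne_two hp2).pow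
        exact hqodd.add_one.neg_one_pow
    have hne0 : ∀ u : F, u ^ (q + 1) = 1 → u ≠ 0 := by
      intro u h h0
      rw [h0, zero_pow (by omega : q + 1 ≠ 0)] at h
      exact zero_ne_one h
    have hselfq : (a ^ (q + 1)) ^ q = a ^ (q + 1) := by
      rw [← pow_mul, show (q + 1) * q = q * q + q by ring, pow_add, hpowcard a, ← pow_succ']
    have hau : ∀ u : F, u ^ (q + 1) = 1 → a + u ≠ 0 := by
      intro u hu h
      have h2 : u = -a := eq_neg_of_add_eq_zero_right h
      rw [h2, neg_pow, hm1, one_mul] at hu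
      exact ha1 hu
    have hnum : ∀ u : F, u ^ (q + 1) = 1 → 1 + a ^ q * u ≠ 0 := by
      intro u hu h
      have h2 : a ^ q * u = -1 := by linear_combination h
      have h3 : (a ^ q * u) ^ (q + 1) = 1 := by rw [h2]; exact hm1
      rw [mul_pow, ← pow_mul, hu, mul_one] at h3
      rw [show q * (q + 1) = (q + 1) * q by ring, pow_mul, hselfq] at h3
      exact ha1 h3
    -- the rational map identity
    have hmob : ∀ u : F, u ^ (q + 1) = 1 →
        u * (a + u) ^ (q - 1) = (1 + a ^ q * u) / (a + u) := by
      intro u hu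
      have hne := hau u hu
      rw [pow_sub₀ _ hne hq1, pow_one, frob]
      field_simp
      linear_combination hu
    -- roots of unity from units
    have hunit : ∀ x : Fˣ, ((x : F) ^ (q - 1)) ^ (q + 1) = 1 := by
      intro x
      rw [← pow_mul, hfactor]
      have h : x ^ Fintype.card Fˣ = 1 := pow_card_eq_one
      rw [hcardu] at h
      calc ((x : F)) ^ (q ^ 2 - 1) = ((x ^ (q ^ 2 - 1) : Fˣ) : F) := by push_cast; rfl
        _ = 1 := by rw [h]; rfl
    -- pointwise identity on units
    have hpt : ∀ x : Fˣ, G (x : F)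
        = ((1 + a ^ q * ((x : F) ^ (q - 1))) / (a + (x : F) ^ (q - 1))) ^ k := by
      intro x
      have hu := hunit x
      set u : F := (x : F) ^ (q - 1) with hu_def
      have hXrs : ((x : F)) ^ (r * s) = u ^ k := by
        have e1 : r * s = (q - 1) * (r * k) := by rw [hk]; ring
        rw [e1, pow_mul, ← hu_def]
        have e2 : r * k = (q + 1) * (m * k) + k := by rw [hrm]; ring
        rw [e2, pow_add, pow_mul, hu, one_pow, one_mul]
      have hG' : G (x : F) = (u * (a + u) ^ (q - 1)) ^ k := by
        simp only [hG]
        rw [mul_pow, ← pow_mul, hXrs, hk, pow_mul, ← mul_pow]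
      rw [hG', hmob u hu]
    -- set-up the image of the power map
    set g : Fˣ → F := fun x => (x : F) ^ (q - 1) with hgdef
    set T : Finset F := (univ : Finset Fˣ).image g with hTdef
    have hmemT : ∀ u : F, u ∈ T ↔ u ^ (q + 1) = 1 := by
      intro u
      constructor
      · intro hu
        rw [hTdef, mem_image] at hu
        obtain ⟨x, _, rfl⟩ := hu
        exact hunit x
      · intro hu
        have hu0 : u ≠ 0 := hne0 u hu
        obtain ⟨γ, hγ⟩ := IsCyclic.exists_generator (α := Fˣ)
        have hordγ : orderOf γ = q ^ 2 - 1 := by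
          rw [orderOf_eq_card_of_forall_mem_zpowers hγ, Nat.card_eq_fintype_card, hcardu]
        obtain ⟨t, ht⟩ := (Submonoid.mem_powers_iff _ _).mp
          ((mem_powers_iff_mem_zpowers).mpr (hγ (Units.mk0 u hu0)))
        have h1 : γ ^ (t * (q + 1)) = 1 := by
          rw [pow_mul, ht]
          exact Units.ext (by push_cast; exact hu)
        have h2 : (q - 1) * (q + 1) ∣ t * (q + 1) := by
          rw [hfactor, ← hordγ]
          exact orderOf_dvd_of_pow_eq_one h1
        have h3 : (q - 1) ∣ t := (Nat.mul_dvd_mul_iff_right (show 0 < q + 1 by omega)).mp h2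
        obtain ⟨w, hw⟩ := h3
        rw [hTdef, mem_image]
        refine ⟨γ ^ w, mem_univ _, ?_⟩
        have h4 : (γ ^ w) ^ (q - 1) = Units.mk0 u hu0 := by
          rw [← pow_mul, mul_comm w (q - 1), ← hw, ht]
        simp only [hgdef]
        calc ((γ ^ w : Fˣ) : F) ^ (q - 1) = (((γ ^ w) ^ (q - 1) : Fˣ) : F) := by push_cast; rfl
          _ = u := by rw [h4]; rfl
    -- constant fibres
    have hfib : ∀ u ∈ T, (univ.filter fun x : Fˣ => g x = u).card
        = (univ.filter fun x : Fˣ => g x = 1).card := by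
      intro u hu
      rw [hTdef, mem_image] at hu
      obtain ⟨x0, _, hx0⟩ := hu
      have hx0' : (x0 : F) ^ (q - 1) = u := hx0
      have hu0 : u ≠ 0 := by
        rw [← hx0']; exact pow_ne_zero _ (Units.ne_zero x0)
      apply Finset.card_nbij' (i := fun y => x0⁻¹ * y) (j := fun y => x0 * y)
      · intro y hy
        simp only [mem_coe, mem_filter, mem_univ, true_and, hgdef] at hy ⊢
        push_cast
        rw [mul_pow, inv_pow, hx0', hy, inv_mul_cancel₀ hu0]
      · intro y hy
        simp only [mem_coe, mem_filter, mem_univ, true_and, hgdef] at hy ⊢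
        push_cast
        rw [mul_pow, hx0', hy, mul_one]
      · intro y _; simp [mul_assoc]
      · intro y _; simp [← mul_assoc]
    -- the Möbius map is a bijection of T
    have hTmaps : ∀ u ∈ T, (1 + a ^ q * u) / (a + u) ∈ T := by
      intro u hu
      rw [hmemT] at hu ⊢
      have hne1 := hau u hu
      have hDq : (a + u) ^ q = a ^ q + u ^ q := frob a u
      have hNq : (1 + a ^ q * u) ^ q = 1 + a * u ^ q := by
        rw [frob, one_pow, mul_pow, ← pow_mul, hpowcard a]
      have hDne : (a ^ q + u ^ q) ≠ 0 := by
        rw [← hDq]; exact pow_ne_zero _ hne1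
      have hND : (1 + a ^ q * u) ^ (q + 1) = (a + u) ^ (q + 1) := by
        rw [pow_succ, pow_succ, hNq, hDq]
        linear_combination (a ^ (q + 1) - 1) * hu
      rw [div_pow, hND, div_self (pow_ne_zero _ hne1)]
    have hTinj : ∀ u ∈ T, ∀ v ∈ T,
        (1 + a ^ q * u) / (a + u) = (1 + a ^ q * v) / (a + v) → u = v := by
      intro u hu v hv h
      rw [hmemT] at hu hv
      have h1 := hau u hu
      have h2 := hau v hv
      rw [div_eq_div_iff h1 h2] at h
      have h3 : ((1 : F) - a ^ (q + 1)) * (v - u) = 0 := by linear_combination h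
      have h4 : (1 : F) - a ^ (q + 1) ≠ 0 := sub_ne_zero.mpr (Ne.symm ha1)
      have h5 := (mul_eq_zero.mp h3).resolve_left h4
      exact (sub_eq_zero.mp h5).symm
    calc ∑ x : F, G x = ∑ x : Fˣ, G (x : F) := hsum_units
      _ = ∑ x : Fˣ, ((1 + a ^ q * g x) / (a + g x)) ^ k :=
          Finset.sum_congr rfl fun x _ => hpt x
      _ = ∑ u ∈ T, (#(univ.filter fun x : Fˣ => g x = u)) • ((1 + a ^ q * u) / (a + u)) ^ k :=
          Finset.sum_comp (fun u => ((1 + a ^ q * u) / (a + u)) ^ k) g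
      _ = ∑ u ∈ T, (#(univ.filter fun x : Fˣ => g x = u)) • u ^ k := by
          refine Finset.sum_bij (fun u _ => (1 + a ^ q * u) / (a + u)) ?_ ?_ ?_ ?_
          · intro u hu; exact hTmaps u hu
          · intro u hu v hv hh; exact hTinj u hu v hv hh
          · intro b hb
            obtain ⟨u, hu, hb'⟩ := surj_on_of_inj_on_of_card_le
              (fun u (_ : u ∈ T) => (1 + a ^ q * u) / (a + u))
              (fun u hu => hTmaps u hu) (fun u v hu hv hh => hTinj u hu v hv hh) le_rfl b hb
            exact ⟨u, hu, hb'.symm⟩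
          · intro u hu
            rw [hfib u hu, hfib _ (hTmaps u hu)]
      _ = ∑ x : Fˣ, (g x) ^ k := (Finset.sum_comp (fun u => u ^ k) g).symm
      _ = ∑ x : Fˣ, ((x : F)) ^ ((q - 1) * k) := by
          refine Finset.sum_congr rfl fun x _ => ?_
          simp only [hgdef]
          rw [← pow_mul]
      _ = 0 := by
          rw [FiniteField.sum_pow_units F ((q - 1) * k), hF, if_neg]
          intro hcon
          have hpos : 0 < (q - 1) * k := Nat.mul_pos (by omega) (by omega)
          have hle : (q - 1) * (q + 1) ≤ (q - 1) * k := by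
            rw [hfactor]; exact Nat.le_of_dvd hpos hcon
          have hlt : (q - 1) * k ≤ (q - 1) * q := Nat.mul_le_mul_left _ hkq
          have h5 : q + 1 ≤ q := Nat.le_of_mul_le_mul_left (le_trans hle hlt) (by omega)
          omega
  · -- case ¬ (q-1) ∣ s
    obtain ⟨γ, hγ⟩ := IsCyclic.exists_generator (α := Fˣ)
    have hordγ : orderOf γ = q ^ 2 - 1 := by
      rw [orderOf_eq_card_of_forall_mem_zpowers hγ, Nat.card_eq_fintype_card, hcardu]
    set c : Fˣ := γ ^ (q + 1) with hcdef
    have hordc : orderOf c = q - 1 := by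
      rw [hcdef, orderOf_pow, hordγ, ← hfactor, Nat.gcd_comm,
        Nat.gcd_eq_left (Dvd.intro_left _ rfl), Nat.mul_div_cancel _ (by omega : 0 < q + 1)]
    have hc1 : (c : F) ^ (q - 1) = 1 := by
      have h := pow_orderOf_eq_one c
      rw [hordc] at h
      have := congrArg (Units.val) h
      push_cast at this
      exact this
    have hcrs : (c : F) ^ (r * s) ≠ 1 := by
      intro hcontra
      have h1 : c ^ (r * s) = 1 := Units.ext (by push_cast; exact hcontra)
      have h2 : q - 1 ∣ r * s := hordc ▸ orderOf_dvd_of_pow_eq_one h1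
      have h3 : Nat.Coprime (q - 1) r := Nat.coprime_comm.mp hgcd
      exact hdvds (h3.dvd_of_dvd_mul_left h2)
    have hkey : ∀ x : F, G ((c : F) * x) = (c : F) ^ (r * s) * G x := by
      intro x
      simp only [hG]
      calc (((c : F) * x) ^ r * (a + ((c : F) * x) ^ (q - 1))) ^ s
          = ((c : F) ^ r * (x ^ r * (a + x ^ (q - 1)))) ^ s := by
            rw [mul_pow (c : F) x r, mul_pow (c : F) x (q - 1), hc1, one_mul]; ring
        _ = (c : F) ^ (r * s) * (x ^ r * (a + x ^ (q - 1))) ^ s := by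
            rw [mul_pow, ← pow_mul]
    have hre : ∑ x : F, G ((c : F) * x) = ∑ x : F, G x := by
      have h := Equiv.sum_comp (Equiv.mulLeft₀ (c : F) (Units.ne_zero c)) G
      simpa using h
    have hfin : ((c : F) ^ (r * s) - 1) * (∑ x : F, G x) = 0 := by
      rw [sub_mul, one_mul, sub_eq_zero]
      calc (c : F) ^ (r * s) * ∑ x : F, G x = ∑ x : F, (c : F) ^ (r * s) * G x :=
            Finset.mul_sum _ _ _
        _ = ∑ x : F, G ((c : F) * x) := Finset.sum_congr rfl fun x _ => (hkey x).symm
        _ = ∑ x : F, G x := hre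
    rcases mul_eq_zero.mp hfin with h | h
    · exact absurd (sub_eq_zero.mp h) hcrs
    · exact h
end

section
/- Let q be a prime power, t ≥ 1, r ≥ 1, and a ∈ F_{q^2}^*. If (-a)^{(q+1)/gcd(q+1,t)} = 1, then f(X) = X^r(a + X^{t(q-1)}) has at least two distinct roots in F_{q^2}, and hence f is not a permutation polynomial of F_{q^2}. -/
lemma cyclic_pow_surj {G : Type*} [Group G] [Fintype G] [IsCyclic G]
    (d : ℕ) (b : G) (hb : b ^ (Fintype.card G / Nat.gcd (Fintype.card G) d) = 1) :
    ∃ x : G, x ^ d = b := by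
  obtain ⟨g, hg⟩ := IsCyclic.exists_generator (α := G)
  set N := Fintype.card G with hN
  have hN0 : 0 < N := Fintype.card_pos
  have hgord : orderOf g = N := by
    rw [orderOf_eq_card_of_forall_mem_zpowers hg, Nat.card_eq_fintype_card]
  obtain ⟨k, hk⟩ : b ∈ Submonoid.powers g := by
    rw [(isOfFinOrder_of_finite g).mem_powers_iff_mem_zpowers]; exact hg b
  have hk : g ^ k = b := hk
  set G' := Nat.gcd N d with hG'
  have hG'0 : 0 < G' := Nat.gcd_pos_of_pos_left d hN0
  have hdvd : N ∣ k * (N / G') := by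
    have h1 : g ^ (k * (N / G')) = 1 := by rw [pow_mul, hk, hb]
    have h2 := orderOf_dvd_of_pow_eq_one h1
    rwa [hgord] at h2
  have hk' : G' ∣ k := by
    have h1 : G' * (N / G') ∣ k * (N / G') := by
      rwa [Nat.mul_div_cancel' (Nat.gcd_dvd_left N d)]
    have h2 : 0 < N / G' := Nat.div_pos (Nat.le_of_dvd hN0 (Nat.gcd_dvd_left N d)) hG'0
    exact (Nat.mul_dvd_mul_iff_right h2).mp h1
  obtain ⟨m, hm⟩ := hk'
  have hbez : (G' : ℤ) = N * Nat.gcdA N d + d * Nat.gcdB N d := Nat.gcd_eq_gcd_ab N d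
  refine ⟨g ^ (Nat.gcdB N d * m), ?_⟩
  have hgN : g ^ (N : ℤ) = 1 := by
    rw [zpow_natCast, ← hgord, pow_orderOf_eq_one]
  calc (g ^ (Nat.gcdB N d * m)) ^ d = g ^ ((G' : ℤ) * m - N * (Nat.gcdA N d * m)) := by
        rw [← zpow_natCast _ d, ← zpow_mul]
        congr 1
        rw [hbez]; ring
    _ = g ^ ((G' : ℤ) * m) * (g ^ (N : ℤ)) ^ (-(Nat.gcdA N d * m)) := by
        rw [← zpow_mul, ← zpow_add]; congr 1; ring
    _ = b := by
        rw [hgN, one_zpow, mul_one, ← Int.natCast_mul, zpow_natCast, ← hm, hk]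

/-- If `(-a)^((q+1)/gcd(q+1,t)) = 1`, then `f(X) = X^r (a + X^{t(q-1)})` has at least
two distinct roots in `F_{q²}`, hence is not a permutation polynomial of `F_{q²}`. -/
theorem not_perm_of_neg_a_power_one
    (q r t : ℕ) (hq : IsPrimePow q) (hr : 1 ≤ r) (ht : 1 ≤ t)
    (F : Type*) [Field F] [Fintype F] (hF : Fintype.card F = q ^ 2)
    (a : F) (ha : a ≠ 0)
    (h : (-a) ^ ((q + 1) / Nat.gcd (q + 1) t) = 1) :
    (∃ x y : F, x ≠ y ∧ x ^ r * (a + x ^ (t * (q - 1))) = 0 ∧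
      y ^ r * (a + y ^ (t * (q - 1))) = 0) ∧
    ¬ Function.Bijective (fun x : F => x ^ r * (a + x ^ (t * (q - 1)))) := by
  classical
  have hq2 : 2 ≤ q := hq.two_le
  have hcard : Fintype.card Fˣ = (q - 1) * (q + 1) := by
    rw [Fintype.card_units, hF]
    obtain ⟨k, rfl⟩ : ∃ k, q = k + 2 := ⟨q - 2, by omega⟩
    have : (k + 2) ^ 2 = (k + 2 - 1) * (k + 2 + 1) + 1 := by
      show (k + 2) ^ 2 = (k + 1) * (k + 2 + 1) + 1
      ring
    omega
  set d := t * (q - 1) with hd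
  have hdiv : Fintype.card Fˣ / Nat.gcd (Fintype.card Fˣ) d = (q + 1) / Nat.gcd (q + 1) t := by
    rw [hcard, hd, mul_comm t (q - 1), Nat.gcd_mul_left,
      Nat.mul_div_mul_left _ _ (by omega : 0 < q - 1)]
  set b : Fˣ := Units.mk0 (-a) (neg_ne_zero.mpr ha) with hb
  have hb1 : b ^ (Fintype.card Fˣ / Nat.gcd (Fintype.card Fˣ) d) = 1 := by
    rw [hdiv]
    ext
    push_cast [hb]
    exact h
  obtain ⟨x, hx⟩ := cyclic_pow_surj d b hb1
  have hxF : (x : F) ^ d = -a := by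
    have := congrArg (Units.val) hx
    push_cast at this
    simpa [hb] using this
  have hx0 : (x : F) ≠ 0 := Units.ne_zero x
  have hroot : (x : F) ^ r * (a + (x : F) ^ d) = 0 := by
    rw [hxF]; ring
  have hzero : (0 : F) ^ r * (a + (0 : F) ^ d) = 0 := by
    rw [zero_pow (by omega : r ≠ 0), zero_mul]
  refine ⟨⟨0, x, fun e => hx0 e.symm, hzero, hroot⟩, fun hbij => ?_⟩
  exact hx0 (hbij.injective (hroot.trans hzero.symm))
end

section
/- For every odd positive integer α, the rational-number identity ∑_{i=0}^{α} C(α,i)(-1)^i [ C(i + (α-1)/2, α)(1/3)^{2i} + C(i + α/2, α)(1/3)^{2i+1} ] = 0 holds, where C(x, α) for rational x denotes the generalized binomial coefficient x(x-1)⋯(x-α+1)/α!. -/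
/-- Generalized binomial coefficient `C(x, n) = x(x-1)⋯(x-n+1)/n!` for `x ∈ ℚ`. -/
noncomputable def gchoose (x : ℚ) (n : ℕ) : ℚ :=
  (descPochhammer ℚ n).eval x / (n.factorial : ℚ)

namespace IdentityAux

@[simp] lemma gchoose_zero (x : ℚ) : gchoose x 0 = 1 := by
  simp [gchoose]

lemma gchoose_succ (x : ℚ) (r : ℕ) :
    gchoose x (r+1) = gchoose x r * (x - r) / (r+1) := by
  have h1 : (r.factorial : ℚ) ≠ 0 := by positivity
  have h2 : ((r : ℚ) + 1) ≠ 0 := by positivity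
  rw [gchoose, gchoose, descPochhammer_succ_eval, Nat.factorial_succ]
  push_cast
  field_simp

lemma gchoose_down (x y : ℚ) (r : ℕ) (hy : y ≠ 0) (hxy : y = x + 1) :
    gchoose x r = gchoose y r * (y - r) / y := by
  subst hxy
  have h1 : (descPochhammer ℚ (r+1)).eval (x+1) = (x+1) * (descPochhammer ℚ r).eval x := by
    rw [descPochhammer_succ_left]
    simp [Polynomial.eval_comp]
  have h2 : (descPochhammer ℚ (r+1)).eval (x+1)
      = (descPochhammer ℚ r).eval (x+1) * (x + 1 - r) := descPochhammer_succ_eval r (x+1)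
  rw [gchoose, gchoose]
  rw [div_mul_eq_mul_div, div_div]
  rw [eq_div_iff (by positivity : ((r.factorial : ℚ) * (x+1)) ≠ 0)]
  have := h1.symm.trans h2
  field_simp
  nlinarith [this]

lemma gchoose_eq_choose (x : ℚ) (n : ℕ) : gchoose x n = Ring.choose x n := by
  have h := Ring.descPochhammer_eq_factorial_smul_choose (R := ℚ) x n
  have h2 : (descPochhammer ℤ n).smeval x = (descPochhammer ℚ n).eval x := by
    rw [Polynomial.descPochhammer_smeval_eq_ascPochhammer,
      Polynomial.ascPochhammer_smeval_eq_eval, descPochhammer_eval_eq_ascPochhammer]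
  rw [gchoose, ← h2, h, nsmul_eq_mul]
  field_simp

@[simp] lemma gchoose_natCast (n r : ℕ) : gchoose (n : ℚ) r = (n.choose r : ℚ) := by
  rw [gchoose_eq_choose, Ring.choose_natCast]

lemma gchoose_vandermonde (i α : ℕ) (c : ℚ) :
    gchoose ((i : ℚ) + c) α
      = ∑ k ∈ Finset.range (α+1), (i.choose k : ℚ) * gchoose c (α - k) := by
  rw [gchoose_eq_choose, Ring.add_choose_eq α (Commute.all _ _),
    Finset.Nat.sum_antidiagonal_eq_sum_range_succ_mk]
  refine Finset.sum_congr rfl fun k _ => ?_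
  rw [Ring.choose_natCast, gchoose_eq_choose]

end IdentityAux

namespace IdentityAux

lemma inner_sum (α k : ℕ) (hk : k ≤ α) (t : ℚ) :
    ∑ i ∈ Finset.range (α+1), (α.choose i : ℚ) * (i.choose k : ℚ) * t^i
      = (α.choose k : ℚ) * t^k * (1+t)^(α-k) := by
  have split : ∑ i ∈ Finset.range (α+1), (α.choose i : ℚ) * (i.choose k : ℚ) * t^i
      = ∑ i ∈ Finset.Ico k (α+1), (α.choose i : ℚ) * (i.choose k : ℚ) * t^i := by
    rw [Finset.range_eq_Ico, ← Finset.sum_Ico_consecutive _ (Nat.zero_le k) (by omega)]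
    have hz : ∑ i ∈ Finset.Ico 0 k, (α.choose i : ℚ) * (i.choose k : ℚ) * t^i = 0 :=
      Finset.sum_eq_zero fun i hi => by
        rw [Nat.choose_eq_zero_of_lt (Finset.mem_Ico.mp hi).2]; simp
    rw [hz, zero_add]
  rw [split, Finset.sum_Ico_eq_sum_range]
  have hn : α + 1 - k = (α - k) + 1 := by omega
  rw [hn]
  have step : ∀ j ∈ Finset.range (α - k + 1),
      (α.choose (k+j) : ℚ) * ((k+j).choose k : ℚ) * t^(k+j)
        = (α.choose k : ℚ) * t^k * (((α-k).choose j : ℚ) * t^j) := by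
    intro j hj
    have h := Nat.choose_mul (n := α) (k := k + j) (Nat.le_add_right k j)
    have h2 : k + j - k = j := by omega
    rw [h2] at h
    have hq := congrArg (fun n : ℕ => (n : ℚ)) h
    push_cast at hq
    rw [pow_add]
    linear_combination (t^k * t^j) * hq
  rw [Finset.sum_congr rfl step, ← Finset.mul_sum]
  congr 1
  rw [add_comm (1:ℚ) t, add_pow]
  exact (Finset.sum_congr rfl fun j hj => by ring).symm

end IdentityAux

namespace IdentityAux

noncomputable def tU (x : ℚ) (r : ℕ) : ℚ := gchoose (2*x+1) r * gchoose x r * (-8)^r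
noncomputable def tV (x : ℚ) (r : ℕ) : ℚ := gchoose (2*x+1) r * gchoose (x+1/2) r * (-8)^r

noncomputable def RU (x y : ℚ) : ℚ :=
  (y^2*(-784*x^4 - 6216*x^3 - 18245*x^2 - 23469*x - 11142)
   + y^3*(1848*x^3 + 10954*x^2 + 21306*x + 13577)
   + y^4*(-1593*x^2 - 6267*x - 6051)
   + y^5*(594*x + 1161) - 81*y^6) / (4*(x+1)*(x+2)^2*(2*x+5))

noncomputable def RV (x y : ℚ) : ℚ :=
  (y^2*(-3136*x^4 - 26432*x^3 - 82388*x^2 - 112312*x - 56355)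
   + y^3*(7392*x^3 + 46056*x^2 + 94152*x + 63018)
   + y^4*(-6372*x^2 - 26160*x - 26379)
   + y^5*(2376*x + 4824) - 324*y^6) / (4*(x+2)*(2*x+3)*(2*x+5)^2)

noncomputable def GU (x : ℚ) (r : ℕ) : ℚ :=
  RU x r * gchoose (2*x+5) r * gchoose (x+2) r * (-8)^r
noncomputable def GV (x : ℚ) (r : ℕ) : ℚ :=
  RV x r * gchoose (2*x+5) r * gchoose (x+5/2) r * (-8)^r

lemma cert_u (m r : ℕ) :
    (2*(m:ℚ)+5)*((m:ℚ)+2) * tU ((m:ℚ)+2) r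
      + 3*(36*(m:ℚ)^2+126*(m:ℚ)+113) * tU ((m:ℚ)+1) r
      + 729*(2*(m:ℚ)+3)*((m:ℚ)+1) * tU (m:ℚ) r
      = GU (m:ℚ) (r+1) - GU (m:ℚ) r := by
  set x : ℚ := (m:ℚ) with hxdef
  have hx : 0 ≤ x := Nat.cast_nonneg m
  have hr : ((r:ℚ)+1) ≠ 0 := by positivity
  have h1 : x+1 ≠ 0 := by intro h; nlinarith
  have h2 : x+2 ≠ 0 := by intro h; nlinarith
  have h22 : 2*x+2 ≠ 0 := by intro h; nlinarith
  have h23 : 2*x+3 ≠ 0 := by intro h; nlinarith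
  have h24 : 2*x+4 ≠ 0 := by intro h; nlinarith
  have h25 : 2*x+5 ≠ 0 := by intro h; nlinarith
  have a5 := gchoose_succ (2*x+5) r
  have a2 := gchoose_succ (x+2) r
  have e4 := gchoose_down (2*x+4) (2*x+5) r h25 (by ring)
  have e3 := gchoose_down (2*x+3) (2*x+4) r h24 (by ring)
  have e2 := gchoose_down (2*x+2) (2*x+3) r h23 (by ring)
  have e1 := gchoose_down (2*x+1) (2*x+2) r h22 (by ring)
  have f1 := gchoose_down (x+1) (x+2) r h2 (by ring)
  have f0 := gchoose_down x (x+1) r h1 (by ring)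
  simp only [tU, GU, RU]
  rw [show 2*(x+2)+1 = 2*x+5 by ring, show 2*(x+1)+1 = 2*x+3 by ring]
  rw [e1, e2, e3, e4, f0, f1, a5, a2, pow_succ]
  push_cast
  field_simp
  ring

lemma cert_v (m r : ℕ) :
    (2*(m:ℚ)+5)*((m:ℚ)+2) * tV ((m:ℚ)+2) r
      + 3*(36*(m:ℚ)^2+126*(m:ℚ)+113) * tV ((m:ℚ)+1) r
      + 729*(2*(m:ℚ)+3)*((m:ℚ)+1) * tV (m:ℚ) r
      = GV (m:ℚ) (r+1) - GV (m:ℚ) r := by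
  set x : ℚ := (m:ℚ) with hxdef
  have hx : 0 ≤ x := Nat.cast_nonneg m
  have hr : ((r:ℚ)+1) ≠ 0 := by positivity
  have h2 : x+2 ≠ 0 := by intro h; nlinarith
  have h22 : 2*x+2 ≠ 0 := by intro h; nlinarith
  have h23 : 2*x+3 ≠ 0 := by intro h; nlinarith
  have h24 : 2*x+4 ≠ 0 := by intro h; nlinarith
  have h25 : 2*x+5 ≠ 0 := by intro h; nlinarith
  have hh3 : x+3/2 ≠ 0 := by intro h; nlinarith
  have hh5 : x+5/2 ≠ 0 := by intro h; nlinarith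
  have a5 := gchoose_succ (2*x+5) r
  have a2 := gchoose_succ (x+5/2) r
  have e4 := gchoose_down (2*x+4) (2*x+5) r h25 (by ring)
  have e3 := gchoose_down (2*x+3) (2*x+4) r h24 (by ring)
  have e2 := gchoose_down (2*x+2) (2*x+3) r h23 (by ring)
  have e1 := gchoose_down (2*x+1) (2*x+2) r h22 (by ring)
  have f1 := gchoose_down (x+3/2) (x+5/2) r hh5 (by ring)
  have f0 := gchoose_down (x+1/2) (x+3/2) r hh3 (by ring)
  simp only [tV, GV, RV]
  rw [show (x+2)+1/2 = x+5/2 by ring, show (x+1)+1/2 = x+3/2 by ring,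
    show 2*(x+2)+1 = 2*x+5 by ring, show 2*(x+1)+1 = 2*x+3 by ring]
  rw [e1, e2, e3, e4, f0, f1, a5, a2, pow_succ]
  push_cast
  field_simp
  ring

end IdentityAux

namespace IdentityAux

lemma gchoose_one (x : ℚ) : gchoose x 1 = x := by
  rw [show (1:ℕ) = 0+1 from rfl, gchoose_succ]; simp

lemma gchoose_two (x : ℚ) : gchoose x 2 = x*(x-1)/2 := by
  rw [show (2:ℕ) = 1+1 from rfl, gchoose_succ, gchoose_one]; norm_num

lemma gchoose_three (x : ℚ) : gchoose x 3 = x*(x-1)*(x-2)/6 := by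
  rw [show (3:ℕ) = 2+1 from rfl, gchoose_succ, gchoose_two]
  norm_num; ring

noncomputable def term (m r : ℕ) : ℚ := tU (m:ℚ) r + (1/3) * tV (m:ℚ) r

noncomputable def Tm (m : ℕ) : ℚ := ∑ r ∈ Finset.range (2*m+2), term m r

lemma term_vanish (m r : ℕ) (h : 2*m+2 ≤ r) : term m r = 0 := by
  have hz : gchoose (2*(m:ℚ)+1) r = 0 := by
    have hc : (2*(m:ℚ)+1) = ((2*m+1 : ℕ) : ℚ) := by push_cast; ring
    rw [hc, gchoose_natCast, Nat.choose_eq_zero_of_lt (by omega), Nat.cast_zero]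
  simp [term, tU, tV, hz]

lemma sum_ext (m M : ℕ) (h : 2*m+2 ≤ M) :
    ∑ r ∈ Finset.range M, term m r = Tm m := by
  rw [Tm]
  symm
  apply Finset.sum_subset (Finset.range_subset_range.mpr h)
  intro r _ hnr
  exact term_vanish m r (by simpa using hnr)

lemma GU_zero (x : ℚ) : GU x 0 = 0 := by norm_num [GU, RU]

lemma GV_zero (x : ℚ) : GV x 0 = 0 := by norm_num [GV, RV]

lemma GU_top (m : ℕ) : GU (m:ℚ) (2*m+6) = 0 := by
  have hz : gchoose (2*(m:ℚ)+5) (2*m+6) = 0 := by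
    have hc : (2*(m:ℚ)+5) = ((2*m+5 : ℕ) : ℚ) := by push_cast; ring
    rw [hc, gchoose_natCast, Nat.choose_eq_zero_of_lt (by omega), Nat.cast_zero]
  simp [GU, hz]

lemma GV_top (m : ℕ) : GV (m:ℚ) (2*m+6) = 0 := by
  have hz : gchoose (2*(m:ℚ)+5) (2*m+6) = 0 := by
    have hc : (2*(m:ℚ)+5) = ((2*m+5 : ℕ) : ℚ) := by push_cast; ring
    rw [hc, gchoose_natCast, Nat.choose_eq_zero_of_lt (by omega), Nat.cast_zero]
  simp [GV, hz]

lemma rec_T (m : ℕ) :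
    (2*(m:ℚ)+5)*((m:ℚ)+2) * Tm (m+2)
      + 3*(36*(m:ℚ)^2+126*(m:ℚ)+113) * Tm (m+1)
      + 729*(2*(m:ℚ)+3)*((m:ℚ)+1) * Tm m = 0 := by
  rw [← sum_ext (m+2) (2*m+6) (by omega), ← sum_ext (m+1) (2*m+6) (by omega),
    ← sum_ext m (2*m+6) (by omega)]
  rw [Finset.mul_sum, Finset.mul_sum, Finset.mul_sum, ← Finset.sum_add_distrib,
    ← Finset.sum_add_distrib]
  have key : ∀ r ∈ Finset.range (2*m+6),
      (2*(m:ℚ)+5)*((m:ℚ)+2) * term (m+2) r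
        + 3*(36*(m:ℚ)^2+126*(m:ℚ)+113) * term (m+1) r
        + 729*(2*(m:ℚ)+3)*((m:ℚ)+1) * term m r
      = (fun r => GU (m:ℚ) r + (1/3) * GV (m:ℚ) r) (r+1)
        - (fun r => GU (m:ℚ) r + (1/3) * GV (m:ℚ) r) r := by
    intro r _
    have hu := cert_u m r
    have hv := cert_v m r
    simp only [term]
    push_cast
    linear_combination hu + (1/3) * hv
  rw [Finset.sum_congr rfl key, Finset.sum_range_sub
    (fun r => GU (m:ℚ) r + (1/3) * GV (m:ℚ) r) (2*m+6)]
  rw [GU_top, GV_top, GU_zero, GV_zero]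
  ring

lemma Tm_zero : Tm 0 = 0 := by
  norm_num [Tm, term, tU, tV, Finset.sum_range_succ, gchoose_one]

lemma Tm_one : Tm 1 = 0 := by
  norm_num [Tm, term, tU, tV, Finset.sum_range_succ, gchoose_one, gchoose_two,
    gchoose_three, show (2*1+2 : ℕ) = 4 from rfl]

lemma Tm_eq_zero (m : ℕ) : Tm m = 0 := by
  suffices h : ∀ n, Tm n = 0 ∧ Tm (n+1) = 0 from (h m).1
  intro n
  induction n with
  | zero => exact ⟨Tm_zero, Tm_one⟩
  | succ k ih =>
    refine ⟨ih.2, ?_⟩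
    have hrec := rec_T k
    rw [ih.1, ih.2] at hrec
    simp only [mul_zero, add_zero] at hrec
    have hco : (2*(k:ℚ)+5)*((k:ℚ)+2) ≠ 0 := by positivity
    have h2 := mul_eq_zero.mp hrec
    rcases h2 with h | h
    · exact absurd h hco
    · simpa using h

end IdentityAux


open IdentityAux in
/-- For every odd positive `α`,
`∑_{i=0}^{α} C(α,i)(-1)^i [ C(i+(α-1)/2, α)(1/3)^{2i} + C(i+α/2, α)(1/3)^{2i+1} ] = 0`. -/
theorem identity_z_eq_third (α : ℕ) (hodd : Odd α) (hpos : 0 < α) :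
    ∑ i ∈ Finset.range (α + 1), (α.choose i : ℚ) * (-1) ^ i *
      (gchoose ((i : ℚ) + ((α : ℚ) - 1) / 2) α * (1 / 3 : ℚ) ^ (2 * i) +
        gchoose ((i : ℚ) + (α : ℚ) / 2) α * (1 / 3 : ℚ) ^ (2 * i + 1)) = 0 := by
  obtain ⟨m, hm⟩ := hodd
  have hα : α = 2*m+1 := by omega
  subst hα
  set N : ℕ := 2*m+1 with hN
  have step1 : ∀ i ∈ Finset.range (N+1),
      ((N.choose i : ℚ)) * (-1)^i *
        (gchoose ((i:ℚ) + (((N:ℕ):ℚ)-1)/2) N * (1/3:ℚ)^(2*i)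
          + gchoose ((i:ℚ) + ((N:ℕ):ℚ)/2) N * (1/3:ℚ)^(2*i+1))
      = ∑ k ∈ Finset.range (N+1),
          ((N.choose i : ℚ) * (i.choose k : ℚ) * ((-1/9:ℚ))^i) *
            (gchoose (m:ℚ) (N-k) + (1/3) * gchoose ((m:ℚ)+1/2) (N-k)) := by
    intro i _
    have ha1 : ((i:ℚ) + (((N:ℕ):ℚ)-1)/2) = (i:ℚ) + (m:ℚ) := by
      rw [hN]; push_cast; ring
    have ha2 : ((i:ℚ) + ((N:ℕ):ℚ)/2) = (i:ℚ) + ((m:ℚ)+1/2) := by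
      rw [hN]; push_cast; ring
    rw [ha1, ha2, gchoose_vandermonde i N (m:ℚ), gchoose_vandermonde i N ((m:ℚ)+1/2)]
    rw [Finset.sum_mul, Finset.sum_mul, ← Finset.sum_add_distrib, Finset.mul_sum]
    refine Finset.sum_congr rfl fun k _ => ?_
    have hp : ((1:ℚ)/3)^(2*i) = (1/9:ℚ)^i := by
      rw [pow_mul]; norm_num
    have hq : ((1:ℚ)/3)^(2*i+1) = (1/9:ℚ)^i * (1/3) := by
      rw [pow_succ, hp]
    have hn : ((-1:ℚ))^i * (1/9:ℚ)^i = ((-1/9:ℚ))^i := by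
      rw [← mul_pow]; norm_num
    rw [hp, hq, ← hn]
    ring
  rw [Finset.sum_congr rfl step1, Finset.sum_comm]
  have step2 : ∀ k ∈ Finset.range (N+1),
      (∑ i ∈ Finset.range (N+1),
        ((N.choose i : ℚ) * (i.choose k : ℚ) * ((-1/9:ℚ))^i) *
          (gchoose (m:ℚ) (N-k) + (1/3) * gchoose ((m:ℚ)+1/2) (N-k)))
      = ((N.choose k : ℚ) * ((-1/9:ℚ))^k * ((8/9:ℚ))^(N-k)) *
          (gchoose (m:ℚ) (N-k) + (1/3) * gchoose ((m:ℚ)+1/2) (N-k)) := by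
    intro k hk
    have hkN : k ≤ N := by simpa using Finset.mem_range_succ_iff.mp hk
    rw [← Finset.sum_mul, inner_sum N k hkN (-1/9), show (1 + (-1/9) : ℚ) = 8/9 by norm_num]
  rw [Finset.sum_congr rfl step2]
  rw [← Finset.sum_range_reflect]
  have step3 : ∀ j ∈ Finset.range (N+1),
      (((N.choose (N+1-1-j)) : ℚ) * ((-1/9:ℚ))^(N+1-1-j) * ((8/9:ℚ))^(N-(N+1-1-j))) *
          (gchoose (m:ℚ) (N-(N+1-1-j)) + (1/3) * gchoose ((m:ℚ)+1/2) (N-(N+1-1-j)))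
      = ((-1/9:ℚ))^N * term m j := by
    intro j hj
    have hjN : j ≤ N := by simpa using Finset.mem_range_succ_iff.mp hj
    have h1 : N+1-1-j = N-j := by omega
    have h2 : N-(N-j) = j := by omega
    rw [h1, h2, Nat.choose_symm hjN]
    have hne : ((-1:ℚ)/9)^j ≠ 0 := pow_ne_zero _ (by norm_num)
    have hkey : ((-1/9:ℚ))^(N-j) * ((8/9:ℚ))^j = ((-1/9:ℚ))^N * ((-8:ℚ))^j := by
      have hA : ((-1/9:ℚ))^(N-j) * ((-1/9:ℚ))^j = ((-1/9:ℚ))^N := by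
        rw [← pow_add]; congr 1; omega
      have hB : ((-8:ℚ))^j * ((-1/9:ℚ))^j = ((8/9:ℚ))^j := by
        rw [← mul_pow]; norm_num
      apply mul_right_cancel₀ (show ((-1/9:ℚ))^j ≠ 0 from pow_ne_zero _ (by norm_num))
      linear_combination ((8/9:ℚ))^j * hA - ((-1/9:ℚ))^N * hB
    have hbr : ((N.choose j : ℚ)) = gchoose (2*(m:ℚ)+1) j := by
      rw [show (2*(m:ℚ)+1) = ((N:ℕ):ℚ) by rw [hN]; push_cast; ring, gchoose_natCast]
    rw [term, tU, tV]
    rw [← hbr]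
    linear_combination ((N.choose j : ℚ)) *
      (gchoose (m:ℚ) j + (1/3) * gchoose ((m:ℚ)+1/2) j) * hkey
  rw [Finset.sum_congr rfl step3, ← Finset.mul_sum]
  rw [show N+1 = 2*m+2 by omega]
  rw [show (∑ j ∈ Finset.range (2*m+2), term m j) = Tm m from rfl, Tm_eq_zero, mul_zero]
end

section
/- For every odd positive integer α, the rational-number identity ∑_{i=0}^{α} C(α,i)(-1)^i [ C(i - 1 - α/2, α)·3^{2i} + C(i - (α+1)/2, α)·3^{2i+1} ] = 0 holds, where C(x,α) is the generalized binomial coefficient for rational x. Moreover this identity is equivalent to the identity ∑_i C(α,i)(-1)^i[C(i+(α-1)/2, α)(1/3)^{2i} + C(i+α/2, α)(1/3)^{2i+1}] = 0. -/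
set_option maxHeartbeats 2000000

lemma gchoose_zero (x : ℚ) : gchoose x 0 = 1 := by
  simp [gchoose]

lemma gchoose_succ (x : ℚ) (n : ℕ) :
    gchoose x (n + 1) = gchoose x n * (x - n) / (n + 1) := by
  rw [gchoose, gchoose, descPochhammer_succ_eval, Nat.factorial_succ]
  push_cast
  rw [div_mul_eq_mul_div, div_div, mul_comm ((n:ℚ)+1)]

lemma gchoose_mul_succ (x : ℚ) (n : ℕ) :
    ((n : ℚ) + 1) * gchoose x (n + 1) = gchoose x n * (x - n) := by
  have h2 : ((n : ℚ) + 1) ≠ 0 := by positivity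
  rw [gchoose_succ, mul_div_cancel₀ _ h2]

lemma gchoose_vandermonde (n : ℕ) (x y : ℚ) :
    ∑ k ∈ Finset.range (n + 1), gchoose x k * gchoose y (n - k) = gchoose (x + y) n := by
  induction n with
  | zero => simp [gchoose_zero]
  | succ n ih =>
      have hne : ((n : ℚ) + 1) ≠ 0 := by positivity
      have key : ((n : ℚ) + 1) *
          ∑ k ∈ Finset.range (n + 2), gchoose x k * gchoose y (n + 1 - k)
          = (x + y - n) * ∑ k ∈ Finset.range (n + 1), gchoose x k * gchoose y (n - k) := by
        have split : ((n : ℚ) + 1) *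
            ∑ k ∈ Finset.range (n + 2), gchoose x k * gchoose y (n + 1 - k)
            = (∑ k ∈ Finset.range (n + 2), (k : ℚ) * gchoose x k * gchoose y (n + 1 - k))
            + (∑ k ∈ Finset.range (n + 2),
                ((n + 1 - k : ℕ) : ℚ) * gchoose y (n + 1 - k) * gchoose x k) := by
          rw [Finset.mul_sum, ← Finset.sum_add_distrib]
          apply Finset.sum_congr rfl
          intro k hk
          have hk' : k ≤ n + 1 := by simpa [Nat.lt_succ_iff] using hk
          have hc : ((n + 1 - k : ℕ) : ℚ) = (n : ℚ) + 1 - k := by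
            push_cast [Nat.cast_sub hk']; ring
          rw [hc]; ring
        have sumA : (∑ k ∈ Finset.range (n + 2), (k : ℚ) * gchoose x k * gchoose y (n + 1 - k))
            = ∑ j ∈ Finset.range (n + 1), gchoose x j * (x - j) * gchoose y (n - j) := by
          rw [Finset.sum_range_succ']
          simp only [Nat.cast_zero, zero_mul, add_zero]
          apply Finset.sum_congr rfl
          intro j _
          have h1 : n + 1 - (j + 1) = n - j := by omega
          have h2 : ((j : ℚ) + 1) * gchoose x (j + 1) = gchoose x j * (x - j) :=
            gchoose_mul_succ x j
          rw [h1]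
          push_cast
          rw [mul_assoc ((j:ℚ)+1) _ _] at *
          rw [show ((j:ℚ)+1) * (gchoose x (j+1) * gchoose y (n-j))
              = (((j:ℚ)+1) * gchoose x (j+1)) * gchoose y (n-j) by ring, h2]
        have sumB : (∑ k ∈ Finset.range (n + 2),
              ((n + 1 - k : ℕ) : ℚ) * gchoose y (n + 1 - k) * gchoose x k)
            = ∑ k ∈ Finset.range (n + 1), gchoose y (n - k) * (y - ((n : ℚ) - k)) * gchoose x k := by
          rw [Finset.sum_range_succ]
          simp only [Nat.sub_self, Nat.cast_zero, zero_mul]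
          rw [add_zero]
          apply Finset.sum_congr rfl
          intro k hk
          have hk' : k ≤ n := by simpa [Nat.lt_succ_iff] using hk
          have h1 : n + 1 - k = (n - k) + 1 := by omega
          have h2 : ((n - k : ℕ) : ℚ) = (n : ℚ) - k := by
            push_cast [Nat.cast_sub hk']; ring
          rw [h1]
          have := gchoose_mul_succ y (n - k)
          rw [h2] at this
          push_cast [Nat.cast_sub hk']
          rw [show ((n:ℚ) - k + 1) * gchoose y (n - k + 1) * gchoose x k
              = (((n - k : ℕ):ℚ) + 1) * gchoose y ((n-k) + 1) * gchoose x k by rw [h2]]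
          rw [gchoose_mul_succ y (n-k), h2]
        rw [split, sumA, sumB, Finset.mul_sum, ← Finset.sum_add_distrib]
        apply Finset.sum_congr rfl
        intro k hk
        ring
      have final : ((n : ℚ) + 1) *
          ∑ k ∈ Finset.range (n + 2), gchoose x k * gchoose y (n + 1 - k)
          = ((n : ℚ) + 1) * gchoose (x + y) (n + 1) := by
        rw [key, ih, gchoose_mul_succ]
        ring
      exact mul_left_cancel₀ hne final

lemma descPochhammer_eval_prod (n : ℕ) (x : ℚ) :
    (descPochhammer ℚ n).eval x = ∏ k ∈ Finset.range n, (x - k) := by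
  induction n with
  | zero => simp [descPochhammer_zero]
  | succ m ih => rw [descPochhammer_succ_eval, ih, Finset.prod_range_succ]

lemma gchoose_reflect (n : ℕ) (hodd : Odd n) (x : ℚ) :
    gchoose ((n:ℚ) - 1 - x) n = - gchoose x n := by
  rw [gchoose, gchoose, descPochhammer_eval_prod, descPochhammer_eval_prod]
  rw [show ∏ k ∈ Finset.range n, ((n:ℚ) - 1 - x - k)
      = ∏ k ∈ Finset.range n, (-1 * (x - ((n-1-k : ℕ) : ℚ))) by
    apply Finset.prod_congr rfl
    intro k hk
    have hk' : k < n := Finset.mem_range.mp hk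
    have : ((n-1-k : ℕ) : ℚ) = (n:ℚ) - 1 - k := by
      have h1 : k ≤ n - 1 := by omega
      push_cast [Nat.cast_sub h1, Nat.cast_sub (show 1 ≤ n by omega)]
      ring
    rw [this]
    ring]
  rw [Finset.prod_mul_distrib, Finset.prod_const, Finset.card_range,
    Finset.prod_range_reflect (fun j => x - (j:ℚ)) n, hodd.neg_one_pow]
  ring

lemma sum_reflect (α : ℕ) (hodd : Odd α) :
    ∑ i ∈ Finset.range (α + 1), (α.choose i : ℚ) * (-1) ^ i *
        (gchoose ((i : ℚ) - 1 - (α : ℚ) / 2) α * (3 : ℚ) ^ (2 * i) +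
          gchoose ((i : ℚ) - ((α : ℚ) + 1) / 2) α * (3 : ℚ) ^ (2 * i + 1))
    = 3^(2*α+1) * ∑ i ∈ Finset.range (α + 1), (α.choose i : ℚ) * (-1) ^ i *
        (gchoose ((i : ℚ) + ((α : ℚ) - 1) / 2) α * (1 / 3 : ℚ) ^ (2 * i) +
          gchoose ((i : ℚ) + (α : ℚ) / 2) α * (1 / 3 : ℚ) ^ (2 * i + 1)) := by
  rw [← Finset.sum_range_reflect (fun i => (α.choose i : ℚ) * (-1) ^ i *
        (gchoose ((i : ℚ) - 1 - (α : ℚ) / 2) α * (3 : ℚ) ^ (2 * i) +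
          gchoose ((i : ℚ) - ((α : ℚ) + 1) / 2) α * (3 : ℚ) ^ (2 * i + 1))) (α+1),
    Finset.mul_sum]
  apply Finset.sum_congr rfl
  intro i hi
  have hi' : i ≤ α := by
    have := Finset.mem_range.mp hi
    omega
  have hred : α + 1 - 1 - i = α - i := by omega
  rw [hred]
  have hcast : ((α - i : ℕ) : ℚ) = (α:ℚ) - i := by
    push_cast [Nat.cast_sub hi']
    ring
  have hchoose : (α.choose (α - i) : ℚ) = (α.choose i : ℚ) := by
    rw [Nat.choose_symm hi']
  have hsq : (-1:ℚ)^i * (-1)^i = 1 := by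
    rw [← pow_add]
    exact Even.neg_one_pow ⟨i, by omega⟩
  have hsign : (-1:ℚ)^(α-i) = -(-1)^i := by
    have h1 : (-1:ℚ)^(α-i) * (-1)^i = (-1)^α := by
      rw [← pow_add]
      congr 1
      omega
    have h2 : (-1:ℚ)^α = -1 := hodd.neg_one_pow
    calc (-1:ℚ)^(α-i) = (-1:ℚ)^(α-i) * ((-1)^i * (-1)^i) := by rw [hsq, mul_one]
      _ = ((-1:ℚ)^(α-i) * (-1)^i) * (-1)^i := by ring
      _ = -(-1)^i := by rw [h1, h2]; ring
  have hg1 : gchoose (((α - i : ℕ) : ℚ) - 1 - (α : ℚ) / 2) α = - gchoose ((i:ℚ) + (α:ℚ)/2) α := by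
    rw [hcast, show (α:ℚ) - i - 1 - (α:ℚ)/2 = (α:ℚ) - 1 - ((i:ℚ) + (α:ℚ)/2) by ring]
    exact gchoose_reflect α hodd _
  have hg2 : gchoose (((α - i : ℕ) : ℚ) - ((α : ℚ) + 1) / 2) α
      = - gchoose ((i:ℚ) + ((α:ℚ)-1)/2) α := by
    rw [hcast, show (α:ℚ) - i - ((α:ℚ)+1)/2 = (α:ℚ) - 1 - ((i:ℚ) + ((α:ℚ)-1)/2) by ring]
    exact gchoose_reflect α hodd _
  have h3ne : ∀ k : ℕ, (3:ℚ)^k ≠ 0 := fun k => by positivity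
  have hp1 : (3:ℚ)^(2*(α-i)) = 3^(2*α+1) * (1/3)^(2*i+1) := by
    rw [one_div, inv_pow, eq_comm, mul_inv_eq_iff_eq_mul₀ (h3ne _), ← pow_add]
    congr 1
    omega
  have hp2 : (3:ℚ)^(2*(α-i)+1) = 3^(2*α+1) * (1/3)^(2*i) := by
    rw [one_div, inv_pow, eq_comm, mul_inv_eq_iff_eq_mul₀ (h3ne _), ← pow_add]
    congr 1
    omega
  rw [hchoose, hsign, hg1, hg2, hp1, hp2]
  ring

open PowerSeries

abbrev Rq := PowerSeries ℚ

noncomputable def Bs (x : ℚ) : Rq := PowerSeries.mk fun k => gchoose x k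

lemma coeff_Bs (x : ℚ) (k : ℕ) : coeff (R := ℚ) k (Bs x) = gchoose x k := coeff_mk _ _

lemma Bs_mul (x y : ℚ) : Bs x * Bs y = Bs (x + y) := by
  ext n
  rw [coeff_mul, coeff_Bs, ← gchoose_vandermonde n x y]
  rw [Finset.Nat.sum_antidiagonal_eq_sum_range_succ (f := fun i j => (coeff (R := ℚ) i) (Bs x) * (coeff (R := ℚ) j) (Bs y)) n]
  simp [coeff_Bs]

lemma Bs_zero : Bs 0 = 1 := by
  ext n
  rw [coeff_Bs, coeff_one]
  cases n with
  | zero => simp [gchoose_zero]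
  | succ m =>
      have : ∀ k, gchoose 0 k = if k = 0 then 1 else 0 := by
        intro k
        induction k with
        | zero => simp [gchoose_zero]
        | succ j ihj =>
            rw [gchoose_succ, ihj]
            cases j with
            | zero => simp
            | succ i => simp
      simp [this]

lemma gchoose_one (k : ℕ) : gchoose 1 k = if k ≤ 1 then 1 else 0 := by
  induction k with
  | zero => simp [gchoose_zero]
  | succ j ihj =>
      rw [gchoose_succ, ihj]
      match j with
      | 0 => norm_num
      | 1 => norm_num
      | (i+2) => norm_num

lemma Bs_one : Bs 1 = 1 + X := by
  ext n
  rw [coeff_Bs, gchoose_one]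
  match n with
  | 0 => simp
  | 1 => simp
  | (i+2) => simp [coeff_X, coeff_one]

lemma Bs_nat (n : ℕ) : Bs n = (1 + X)^n := by
  induction n with
  | zero => simpa using Bs_zero
  | succ m ih =>
      have hc : ((m+1 : ℕ) : ℚ) = (m : ℚ) + 1 := by push_cast; ring
      rw [hc, ← Bs_mul, ih, Bs_one, pow_succ]

lemma Bs_half_pow (k : ℕ) : Bs (1/2) ^ k = Bs (k / 2) := by
  induction k with
  | zero => simpa using Bs_zero.symm
  | succ m ih =>
      rw [pow_succ, ih, Bs_mul]
      norm_num
      rw [← add_div]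

-- reduction of the main sum
lemma sum_eq_neg_coeff (α : ℕ) (hodd : Odd α) :
    ∑ i ∈ Finset.range (α + 1), (α.choose i : ℚ) * (-1) ^ i *
        (gchoose ((i : ℚ) - 1 - (α : ℚ) / 2) α * (3 : ℚ) ^ (2 * i) +
          gchoose ((i : ℚ) - ((α : ℚ) + 1) / 2) α * (3 : ℚ) ^ (2 * i + 1))
    = - coeff (R := ℚ) α ((Bs (-1 - (α:ℚ)/2) + (C (R := ℚ) 3) * Bs (-((α:ℚ)+1)/2)) * (8 + 9*X)^α) := by
  set c1 : ℚ := -1 - (α:ℚ)/2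
  set c2 : ℚ := -((α:ℚ)+1)/2
  have term : ∀ i : ℕ, (α.choose i : ℚ) * (-1) ^ i *
        (gchoose ((i : ℚ) - 1 - (α : ℚ) / 2) α * (3 : ℚ) ^ (2 * i) +
          gchoose ((i : ℚ) - ((α : ℚ) + 1) / 2) α * (3 : ℚ) ^ (2 * i + 1))
      = coeff (R := ℚ) α ((C (R := ℚ) ((α.choose i : ℚ))) * ((-9 * (1+X))^i * (Bs c1 + (C (R := ℚ) 3) * Bs c2))) := by
    intro i
    have hb1 : Bs c1 * (1+X)^i = Bs (c1 + i) := by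
      rw [← Bs_nat, Bs_mul]
    have hb2 : Bs c2 * (1+X)^i = Bs (c2 + i) := by
      rw [← Bs_nat, Bs_mul]
    have hterm : (-9 * (1+X) : Rq)^i = (C (R := ℚ) ((-9)^i)) * (1+X)^i := by
      have h9 : (-9 : Rq) = C (R := ℚ) (-9) := by
        rw [map_neg]; norm_num [map_ofNat]
      rw [mul_pow, h9, ← map_pow]
    rw [hterm, coeff_C_mul]
    have hre : (C (R := ℚ) ((-9:ℚ)^i)) * (1+X)^i * (Bs c1 + (C (R := ℚ) 3) * Bs c2)
        = (C (R := ℚ) ((-9:ℚ)^i)) * ((Bs c1 + (C (R := ℚ) 3) * Bs c2) * (1+X)^i) := by ring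
    rw [hre, coeff_C_mul]
    rw [add_mul, hb1, mul_assoc (C (R := ℚ) 3) _ _, hb2]
    rw [map_add, coeff_C_mul, coeff_Bs, coeff_Bs]
    have e1 : c1 + i = (i : ℚ) - 1 - (α : ℚ)/2 := by simp only [c1]; ring
    have e2 : c2 + i = (i : ℚ) - ((α : ℚ)+1)/2 := by simp only [c2]; ring
    rw [e1, e2]
    have p1 : (3:ℚ)^(2*i) = 9^i := by rw [pow_mul]; norm_num
    have p2 : (3:ℚ)^(2*i+1) = 3 * 9^i := by rw [pow_succ, pow_mul]; ring
    have p0 : (-9:ℚ)^i = (-1)^i * 9^i := by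
      rw [show (-9:ℚ) = -1 * 9 by norm_num, mul_pow]
    rw [p1, p2, p0]
    ring
  rw [Finset.sum_congr rfl (fun i _ => term i), ← map_sum]
  have hsum : ∑ i ∈ Finset.range (α + 1),
        (C (R := ℚ) ((α.choose i : ℚ))) * ((-9 * (1+X))^i * (Bs c1 + (C (R := ℚ) 3) * Bs c2))
      = ((-9 * (1+X) + 1)^α) * (Bs c1 + (C (R := ℚ) 3) * Bs c2) := by
    rw [add_pow, Finset.sum_mul]
    apply Finset.sum_congr rfl
    intro i _
    rw [one_pow, mul_one]
    rw [show ((C (R := ℚ) ((α.choose i : ℚ)))) = ((α.choose i : Rq)) by simp [map_natCast]]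
    ring
  rw [hsum]
  have hfac : (-9 * (1+X) + 1 : Rq)^α = -((8+9*X)^α) := by
    have : (-9 * (1+X) + 1 : Rq) = -(8 + 9*X) := by ring
    rw [this, (hodd.neg_pow _)]
  rw [hfac]
  simp [mul_comm]

variable (N : ℕ)

noncomputable def Iq (N : ℕ) : Ideal Rq := Ideal.span {(X : Rq)^(N+1)}

noncomputable def piq (N : ℕ) : Rq →+* (Rq ⧸ Iq N) := Ideal.Quotient.mk (Iq N)

lemma piq_eq_iff (F G : Rq) : piq N F = piq N G ↔ (X : Rq)^(N+1) ∣ F - G := by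
  rw [piq, Ideal.Quotient.mk_eq_mk_iff_sub_mem, Iq, Ideal.mem_span_singleton]

lemma piq_eq_zero_iff (F : Rq) : piq N F = 0 ↔ (X : Rq)^(N+1) ∣ F := by
  rw [← map_zero (piq N), piq_eq_iff, sub_zero]

noncomputable def ev (z : Rq ⧸ Iq N) (q : Rq) : Rq ⧸ Iq N :=
  ∑ n ∈ Finset.range (N+1), piq N (C (R := ℚ) (coeff (R := ℚ) n q)) * z^n

lemma ev_one (z : Rq ⧸ Iq N) : ev N z 1 = 1 := by
  rw [ev, Finset.sum_range_succ' (fun n => piq N (C (R := ℚ) (coeff (R := ℚ) n (1:Rq))) * z^n) N]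
  have h1 : ∀ j, piq N (C (R := ℚ) (coeff (R := ℚ) (j+1) (1:Rq))) * z^(j+1) = 0 := by
    intro j
    rw [coeff_one, if_neg (Nat.succ_ne_zero j)]
    simp
  rw [Finset.sum_eq_zero fun j _ => h1 j, zero_add]
  rw [coeff_one, if_pos rfl]
  simp

lemma ev_add (z : Rq ⧸ Iq N) (p q : Rq) : ev N z (p + q) = ev N z p + ev N z q := by
  rw [ev, ev, ev, ← Finset.sum_add_distrib]
  apply Finset.sum_congr rfl
  intro n _
  rw [map_add, map_add, map_add]
  ring

lemma ev_C_mul (z : Rq ⧸ Iq N) (a : ℚ) (q : Rq) :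
    ev N z (C (R := ℚ) a * q) = piq N (C (R := ℚ) a) * ev N z q := by
  rw [ev, ev, Finset.mul_sum]
  apply Finset.sum_congr rfl
  intro n _
  rw [coeff_C_mul, map_mul, map_mul]
  ring

lemma ev_X_mul (z : Rq ⧸ Iq N) (hz : z^(N+1) = 0) (q : Rq) :
    ev N z (X * q) = z * ev N z q := by
  rw [ev, ev, Finset.mul_sum]
  rw [Finset.sum_range_succ' (fun n => piq N (C (R := ℚ) (coeff (R := ℚ) n (X * q))) * z^n) N]
  rw [Finset.sum_range_succ (fun n => z * (piq N (C (R := ℚ) (coeff (R := ℚ) n q)) * z^n)) N]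
  have h0 : piq N (C (R := ℚ) (coeff (R := ℚ) 0 (X * q))) * z^0 = 0 := by
    have hc : coeff (R := ℚ) 0 ((X : Rq) * q) = 0 := by
      rw [coeff_zero_eq_constantCoeff, map_mul, constantCoeff_X, zero_mul]
    rw [hc]; simp
  have hN : z * (piq N (C (R := ℚ) (coeff (R := ℚ) N q)) * z^N) = 0 := by
    rw [show z * (piq N (C (R := ℚ) (coeff (R := ℚ) N q)) * z^N) = piq N (C (R := ℚ) (coeff (R := ℚ) N q)) * z^(N+1) by ring,
      hz, mul_zero]
  rw [h0, hN, add_zero, add_zero]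
  apply Finset.sum_congr rfl
  intro n _
  rw [coeff_succ_X_mul]
  ring

lemma ev_linear_mul (z : Rq ⧸ Iq N) (hz : z^(N+1) = 0) (a b : ℚ) (q : Rq) :
    ev N z ((C (R := ℚ) a + C (R := ℚ) b * X) * q)
      = (piq N (C (R := ℚ) a) + piq N (C (R := ℚ) b) * z) * ev N z q := by
  have h : (C (R := ℚ) a + C (R := ℚ) b * X) * q = C (R := ℚ) a * q + C (R := ℚ) b * (X * q) := by ring
  rw [h, ev_add, ev_C_mul, ev_C_mul, ev_X_mul N z hz]
  ring

lemma ev_linear_pow_mul (z : Rq ⧸ Iq N) (hz : z^(N+1) = 0) (a b : ℚ) (k : ℕ) (q : Rq) :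
    ev N z ((C (R := ℚ) a + C (R := ℚ) b * X)^k * q)
      = (piq N (C (R := ℚ) a) + piq N (C (R := ℚ) b) * z)^k * ev N z q := by
  induction k generalizing q with
  | zero => simp
  | succ m ih =>
      have h : (C (R := ℚ) a + C (R := ℚ) b * X)^(m+1) * q
          = (C (R := ℚ) a + C (R := ℚ) b * X)^m * ((C (R := ℚ) a + C (R := ℚ) b * X) * q) := by ring
      rw [h, ih, ev_linear_mul N z hz, pow_succ]
      ring

lemma ev_pi (ζ : Rq) (q : Rq) :
    ev N (piq N ζ) q = piq N (∑ n ∈ Finset.range (N+1), C (R := ℚ) (coeff (R := ℚ) n q) * ζ^n) := by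
  rw [ev, map_sum]
  apply Finset.sum_congr rfl
  intro n _
  rw [map_mul, map_pow]

lemma isUnit_piq (F : Rq) (h : constantCoeff (R := ℚ) F ≠ 0) : IsUnit (piq N F) := by
  apply IsUnit.of_mul_eq_one (piq N F⁻¹)
  rw [← map_mul, PowerSeries.mul_inv_cancel F h, map_one]

lemma coeff_linear_pow_eq_zero (a b : ℚ) (d m : ℕ) (h : d < m) :
    coeff (R := ℚ) m ((C (R := ℚ) a + C (R := ℚ) b * X)^d) = 0 := by
  induction d generalizing m with
  | zero =>
      rw [pow_zero, coeff_one, if_neg (by omega)]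
  | succ e ih =>
      rw [pow_succ, mul_add, map_add]
      have h1 : coeff (R := ℚ) m ((C (R := ℚ) a + C (R := ℚ) b * X)^e * C (R := ℚ) a) = 0 := by
        rw [mul_comm, coeff_C_mul, ih m (by omega), mul_zero]
      have h2 : coeff (R := ℚ) m ((C (R := ℚ) a + C (R := ℚ) b * X)^e * (C (R := ℚ) b * X)) = 0 := by
        rw [show ((C (R := ℚ) a + C (R := ℚ) b * X)^e * (C (R := ℚ) b * X)) = C (R := ℚ) b * ((C (R := ℚ) a + C (R := ℚ) b * X)^e * X) by ring,
          coeff_C_mul]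
        match m, h with
        | (m+1), h =>
          rw [coeff_succ_mul_X, ih m (by omega), mul_zero]
      rw [h1, h2, add_zero]

lemma main_core (α : ℕ) (hodd : Odd α) (hpos : 0 < α) :
    coeff (R := ℚ) α (((2 + 3*X : Rq)^α * (4 + 3*X)^(α+1)) *
      ((((1:Rq) + X)^(α+1) * (2 + X)^(α+1)))⁻¹) = 0 := by
  obtain ⟨m, hm⟩ : ∃ m, α = m + 1 := ⟨α - 1, by omega⟩
  -- C-numeral conversions
  have hC1 : (1 : Rq) = C (R := ℚ) 1 := (map_one _).symm
  have hC2 : (2 : Rq) = C (R := ℚ) 2 := (map_ofNat (C (R := ℚ)) 2).symm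
  have hC3 : (3 : Rq) = C (R := ℚ) 3 := (map_ofNat (C (R := ℚ)) 3).symm
  have hC4 : (4 : Rq) = C (R := ℚ) 4 := (map_ofNat (C (R := ℚ)) 4).symm
  set L32 : Rq := 2 + 3*X with hL32
  set L34 : Rq := 4 + 3*X with hL34
  set L11 : Rq := 1 + X with hL11
  set L12 : Rq := 2 + X with hL12
  set Rr : Rq := L11^(α+1) * L12^(α+1) with hRr
  set f : Rq := (L32^α * L34^(α+1)) * Rr⁻¹ with hf
  have ccN : constantCoeff (R := ℚ) (2:Rq) = 2 := by rw [hC2, constantCoeff_C]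
  have cc32 : constantCoeff (R := ℚ) L32 = 2 := by rw [hL32]; simp [ccN]
  have cc32' : constantCoeff (R := ℚ) L32 ≠ 0 := by rw [cc32]; norm_num
  have ccRr : constantCoeff (R := ℚ) Rr ≠ 0 := by
    have c11 : constantCoeff (R := ℚ) L11 = 1 := by rw [hL11]; simp
    have c12 : constantCoeff (R := ℚ) L12 = 2 := by rw [hL12]; simp [ccN]
    rw [hRr, map_mul, map_pow, map_pow, c11, c12]
    norm_num
  have hRinv : Rr * Rr⁻¹ = 1 := PowerSeries.mul_inv_cancel Rr ccRr
  have hL32inv : L32 * L32⁻¹ = 1 := PowerSeries.mul_inv_cancel L32 cc32'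
  have hQRf : L32^α * L34^(α+1) = Rr * f := by
    rw [hf, show Rr * ((L32^α * L34^(α+1)) * Rr⁻¹) = (L32^α * L34^(α+1)) * (Rr * Rr⁻¹) by ring,
      hRinv, mul_one]
  set ψ : Rq := -2 * X * L32⁻¹ with hψ
  set z : Rq ⧸ Iq α := piq α ψ with hzdef
  have hz : z^(α+1) = 0 := by
    rw [hzdef, ← map_pow, piq_eq_zero_iff]
    exact ⟨(-2 * L32⁻¹)^(α+1), by rw [hψ, show (-2 : Rq) * X * L32⁻¹ = X * (-2 * L32⁻¹) by ring,
      mul_pow]⟩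
  -- key evaluation identities
  have e32 : (2 + 3 * ψ) * L32 = 4 := by
    rw [hψ]
    linear_combination (2:Rq) * hL32 + (-6 : Rq)*X*hL32inv
  have e34 : (4 + 3 * ψ) * L32 = 2 * L34 := by
    rw [hψ]
    linear_combination (4:Rq) * hL32 - (2:Rq) * hL34 + (-6 : Rq)*X*hL32inv
  have e11 : (1 + 1 * ψ) * L32 = L12 := by
    rw [hψ]
    linear_combination hL32 - hL12 + (-2 : Rq)*X*hL32inv
  have e12 : (2 + 1 * ψ) * L32 = 4 * L11 := by
    rw [hψ]
    linear_combination (2:Rq) * hL32 - (4:Rq) * hL11 + (-2 : Rq)*X*hL32inv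
  -- the evaluation equality
  set P : Rq := ∑ n ∈ Finset.range (α+1), C (R := ℚ) (coeff (R := ℚ) n f) * ψ^n with hP
  have hπ : piq α ((2 + 3*ψ)^α * ((4 + 3*ψ)^(α+1)))
      = piq α ((1 + 1*ψ)^(α+1) * ((2 + 1*ψ)^(α+1) * P)) := by
    have harg : (C (R := ℚ) 2 + C (R := ℚ) 3*X)^α * ((C (R := ℚ) 4 + C (R := ℚ) 3*X)^(α+1) * 1)
        = (C (R := ℚ) 1 + C (R := ℚ) 1*X)^(α+1) * ((C (R := ℚ) 2 + C (R := ℚ) 1*X)^(α+1) * f) := by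
      rw [← hC1, ← hC2, ← hC3, ← hC4, one_mul, mul_one]
      rw [show ((1:Rq) + X)^(α+1) * (((2:Rq) + X)^(α+1) * f) = Rr * f by rw [hRr, hL11, hL12]; ring,
        ← hQRf, hL32, hL34]
    have h1 := ev_linear_pow_mul α z hz 2 3 α ((C (R := ℚ) 4 + C (R := ℚ) 3*X)^(α+1) * 1)
    rw [ev_linear_pow_mul α z hz 4 3 (α+1) 1, ev_one] at h1
    have h2 := ev_linear_pow_mul α z hz 1 1 (α+1) ((C (R := ℚ) 2 + C (R := ℚ) 1*X)^(α+1) * f)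
    rw [ev_linear_pow_mul α z hz 2 1 (α+1) f] at h2
    have hef : ev α z f = piq α P := by
      rw [hzdef, ev_pi, hP]
    rw [hef] at h2
    have h12 : (piq α (C (R := ℚ) 2) + piq α (C (R := ℚ) 3) * z)^α
          * ((piq α (C (R := ℚ) 4) + piq α (C (R := ℚ) 3) * z)^(α+1) * 1)
        = (piq α (C (R := ℚ) 1) + piq α (C (R := ℚ) 1) * z)^(α+1)
          * ((piq α (C (R := ℚ) 2) + piq α (C (R := ℚ) 1) * z)^(α+1) * piq α P) := by
      rw [← h1, ← h2, harg]
    have conv : ∀ a b : ℚ, piq α (C (R := ℚ) a) + piq α (C (R := ℚ) b) * z = piq α (C (R := ℚ) a + C (R := ℚ) b * ψ) := by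
      intro a b
      rw [hzdef, ← map_mul, ← map_add]
    rw [conv 2 3, conv 4 3, conv 1 1, conv 2 1] at h12
    rw [← map_pow, ← map_pow, ← map_pow, ← map_pow, ← map_mul, mul_one, ← map_mul, ← map_mul] at h12
    rw [← hC1, ← hC2, ← hC3, ← hC4] at h12
    exact h12
  have hdvd1 : (X:Rq)^(α+1) ∣ ((2 + 3*ψ)^α * ((4 + 3*ψ)^(α+1))
      - (1 + 1*ψ)^(α+1) * ((2 + 1*ψ)^(α+1) * P)) := by
    rw [← piq_eq_iff]
    exact hπ
  -- multiply by L32^(2α+2) and by L32^m ⇒ total L32^(3α... careful: multiply difference by L32^(2α+2+m)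
  have hdvd2 : (X:Rq)^(α+1) ∣ ((2 + 3*ψ)^α * ((4 + 3*ψ)^(α+1))
      - (1 + 1*ψ)^(α+1) * ((2 + 1*ψ)^(α+1) * P)) * (L32^(2*α+2) * L32^m) :=
    hdvd1.mul_right _
  have hkey : ((2 + 3*ψ)^α * ((4 + 3*ψ)^(α+1))
      - (1 + 1*ψ)^(α+1) * ((2 + 1*ψ)^(α+1) * P)) * (L32^(2*α+2) * L32^m)
      = (2:Rq)^(2*α+2) * Rr * ((2:Rq)^m * f - P * L32^m) := by
    have hsplit : (L32:Rq)^(2*α+2) = L32^α * L32^(α+1) * L32 := by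
      rw [← pow_add, ← pow_succ]
      congr 1
      omega
    have step1 : ((2 + 3*ψ)^α * ((4 + 3*ψ)^(α+1))) * (L32^(2*α+2) * L32^m)
        = ((2+3*ψ)*L32)^α * ((4+3*ψ)*L32)^(α+1) * (L32 * L32^m) := by
      rw [hsplit, mul_pow, mul_pow]; ring
    have hsplit2 : (L32:Rq)^(2*α+2) = L32^(α+1) * L32^(α+1) := by
      rw [← pow_add]
      congr 1
      omega
    have step2 : ((1 + 1*ψ)^(α+1) * ((2 + 1*ψ)^(α+1) * P)) * (L32^(2*α+2) * L32^m)
        = ((1+1*ψ)*L32)^(α+1) * ((2+1*ψ)*L32)^(α+1) * (P * L32^m) := by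
      rw [hsplit2, mul_pow, mul_pow]
      ring
    rw [sub_mul, step1, step2, e32, e34, e11, e12]
    have hLL : (L32 : Rq) * L32^m = L32^α := by
      rw [← pow_succ']
      congr 1
      omega
    rw [hLL, mul_pow, mul_pow]
    have hQ2 : (L32:Rq)^α * L34^(α+1) = Rr * f := hQRf
    have hconst : (4:Rq)^α * 2^(α+1) = 2^(2*α+2) * 2^m := by
      rw [show (4:Rq) = 2^2 by norm_num, ← pow_mul, ← pow_add, ← pow_add,
        show 2*α+(α+1) = 2*α+2+m by omega]
    calc (4:Rq)^α * ((2:Rq)^(α+1) * L34^(α+1)) * L32^α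
          - L12^(α+1) * ((4:Rq)^(α+1) * L11^(α+1)) * (P * L32^m)
        = (4:Rq)^α * 2^(α+1) * (L32^α * L34^(α+1)) - 4^(α+1) * Rr * (P * L32^m) := by
          rw [hRr]; ring
      _ = (2:Rq)^(2*α+2) * 2^m * (Rr * f) - 4^(α+1) * Rr * (P * L32^m) := by
          rw [hQ2, hconst]
      _ = (2:Rq)^(2*α+2) * Rr * ((2:Rq)^m * f - P * L32^m) := by
          rw [show (4:Rq)^(α+1) = 2^(2*α+2) by
            rw [show (4:Rq) = 2^2 by norm_num, ← pow_mul, show 2*(α+1) = 2*α+2 by omega]]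
          ring
  rw [hkey] at hdvd2
  -- cancel the unit
  have hdvd3 : (X:Rq)^(α+1) ∣ ((2:Rq)^m * f - P * L32^m) := by
    obtain ⟨K, hK⟩ := hdvd2
    have hW : ((2:Rq)^(2*α+2) * Rr) * (C (R := ℚ) ((2:ℚ)^(2*α+2))⁻¹ * Rr⁻¹) = 1 := by
      rw [show ((2:Rq)^(2*α+2) * Rr) * (C (R := ℚ) ((2:ℚ)^(2*α+2))⁻¹ * Rr⁻¹)
        = ((2:Rq)^(2*α+2) * C (R := ℚ) ((2:ℚ)^(2*α+2))⁻¹) * (Rr * Rr⁻¹) by ring, hRinv, mul_one]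
      rw [hC2, ← map_pow, ← map_mul]
      rw [mul_inv_cancel₀ (by positivity)]
      exact map_one _
    refine ⟨(C (R := ℚ) ((2:ℚ)^(2*α+2))⁻¹ * Rr⁻¹) * K, ?_⟩
    calc (2:Rq)^m * f - P * L32^m
        = (((2:Rq)^(2*α+2) * Rr) * (C (R := ℚ) ((2:ℚ)^(2*α+2))⁻¹ * Rr⁻¹)) * ((2:Rq)^m * f - P * L32^m) := by
          rw [hW, one_mul]
      _ = (C (R := ℚ) ((2:ℚ)^(2*α+2))⁻¹ * Rr⁻¹) * ((2:Rq)^(2*α+2) * Rr * ((2:Rq)^m * f - P * L32^m)) := by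
          ring
      _ = (C (R := ℚ) ((2:ℚ)^(2*α+2))⁻¹ * Rr⁻¹) * (X^(α+1) * K) := by rw [hK]
      _ = X^(α+1) * ((C (R := ℚ) ((2:ℚ)^(2*α+2))⁻¹ * Rr⁻¹) * K) := by ring
  -- extract coefficient α
  obtain ⟨K, hK⟩ := hdvd3
  have hcoeffK : coeff (R := ℚ) α ((X:Rq)^(α+1) * K) = 0 := by
    rw [coeff_X_pow_mul' K (α+1) α, if_neg (by omega)]
  have hcoeff : coeff (R := ℚ) α ((2:Rq)^m * f) = coeff (R := ℚ) α (P * L32^m) := by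
    have := congrArg (coeff (R := ℚ) α) hK
    rw [map_sub, hcoeffK] at this
    linarith [this]
  -- LHS coefficient
  have hlhs : coeff (R := ℚ) α ((2:Rq)^m * f) = 2^m * coeff (R := ℚ) α f := by
    rw [hC2, ← map_pow, coeff_C_mul]
  -- RHS coefficient
  have hterm0 : ∀ n, n ≤ m → coeff (R := ℚ) α (ψ^n * L32^m) = 0 := by
    intro n hn
    have hψn : ψ^n * L32^m = C (R := ℚ) ((-2:ℚ)^n) * (X^n * L32^(m-n)) := by
      rw [hψ, show ((-2:Rq) * X * L32⁻¹)^n = (-2:Rq)^n * X^n * (L32⁻¹)^n by rw [mul_pow, mul_pow]]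
      rw [show (L32:Rq)^m = L32^n * L32^(m-n) by rw [← pow_add]; congr 1; omega]
      have hin : ((L32⁻¹:Rq))^n * L32^n = 1 := by
        rw [← mul_pow, mul_comm, hL32inv, one_pow]
      calc (-2:Rq)^n * X^n * (L32⁻¹)^n * (L32^n * L32^(m-n))
          = (-2:Rq)^n * X^n * L32^(m-n) * ((L32⁻¹)^n * L32^n) := by ring
        _ = (-2:Rq)^n * (X^n * L32^(m-n)) := by rw [hin]; ring
        _ = C (R := ℚ) ((-2:ℚ)^n) * (X^n * L32^(m-n)) := by
            rw [show (-2:Rq) = C (R := ℚ) (-2) by rw [map_neg, ← hC2], ← map_pow]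
    rw [hψn, coeff_C_mul, coeff_X_pow_mul' _ n α, if_pos (by omega)]
    rw [hL32, hC2, hC3, coeff_linear_pow_eq_zero 2 3 (m-n) (α-n) (by omega), mul_zero]
  have hterma : coeff (R := ℚ) α (ψ^α * L32^m) = -2^m := by
    have hψa : ψ^α * L32^m = C (R := ℚ) ((-2:ℚ)^α) * (X^α * L32⁻¹) := by
      rw [hψ, show ((-2:Rq) * X * L32⁻¹)^α = (-2:Rq)^α * X^α * (L32⁻¹)^α by rw [mul_pow, mul_pow]]
      have hin : ((L32⁻¹:Rq))^m * L32^m = 1 := by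
        rw [← mul_pow, mul_comm, hL32inv, one_pow]
      calc (-2:Rq)^α * X^α * (L32⁻¹)^α * L32^m
          = (-2:Rq)^α * X^α * L32⁻¹ * ((L32⁻¹)^m * L32^m) := by
            rw [show ((L32⁻¹:Rq))^α = (L32⁻¹)^m * L32⁻¹ by rw [← pow_succ]; congr 1]
            ring
        _ = (-2:Rq)^α * (X^α * L32⁻¹) := by rw [hin]; ring
        _ = C (R := ℚ) ((-2:ℚ)^α) * (X^α * L32⁻¹) := by
            rw [show (-2:Rq) = C (R := ℚ) (-2) by rw [map_neg, ← hC2], ← map_pow]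
    rw [hψa, coeff_C_mul, coeff_X_pow_mul' _ α α, if_pos le_rfl, Nat.sub_self]
    rw [coeff_zero_eq_constantCoeff, constantCoeff_inv, cc32]
    rw [hodd.neg_pow, hm, pow_succ]
    ring
  have hrhs : coeff (R := ℚ) α (P * L32^m) = -2^m * coeff (R := ℚ) α f := by
    rw [hP, Finset.sum_mul, map_sum]
    have heach : ∀ n ∈ Finset.range (α+1),
        coeff (R := ℚ) α (C (R := ℚ) (coeff (R := ℚ) n f) * ψ^n * L32^m)
        = coeff (R := ℚ) n f * coeff (R := ℚ) α (ψ^n * L32^m) := by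
      intro n _
      rw [mul_assoc, coeff_C_mul]
    rw [Finset.sum_congr rfl heach, Finset.sum_range_succ]
    rw [Finset.sum_eq_zero (fun n hn => by
      rw [hterm0 n (by simp at hn; omega), mul_zero]), zero_add, hterma]
    ring
  rw [hlhs, hrhs] at hcoeff
  have h2m : (2:ℚ)^m ≠ 0 := by positivity
  have : (2:ℚ)^m * coeff (R := ℚ) α f + 2^m * coeff (R := ℚ) α f = 0 := by linarith
  have h2 : (2 * (2:ℚ)^m) * coeff (R := ℚ) α f = 0 := by linarith
  rcases mul_eq_zero.mp h2 with h | h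
  · exfalso
    have : (2:ℚ) * 2^m ≠ 0 := by positivity
    exact this h
  · exact h

noncomputable def Ei (k : ℕ) : Rq :=
  PowerSeries.mk fun j => (-1)^j * ((k+j-1).choose j : ℚ) * (1/2)^(k+j)

lemma Ei_zero : Ei 0 = 1 := by
  ext j
  rw [Ei, coeff_mk, coeff_one]
  cases j with
  | zero => norm_num
  | succ i =>
      rw [if_neg (Nat.succ_ne_zero i)]
      have h : (0+(i+1)-1).choose (i+1) = 0 := Nat.choose_eq_zero_of_lt (by omega)
      rw [h]
      norm_num

lemma L12_mul_Ei (K : ℕ) : (2 + X : Rq) * Ei (K+1) = Ei K := by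
  ext j
  rw [add_mul, map_add, show ((2:Rq)) = C (R := ℚ) 2 from (map_ofNat (C (R := ℚ)) 2).symm, coeff_C_mul]
  cases j with
  | zero =>
      have hx : coeff (R := ℚ) 0 ((X:Rq) * Ei (K+1)) = 0 := by
        rw [coeff_zero_eq_constantCoeff, map_mul, constantCoeff_X, zero_mul]
      rw [hx, add_zero, Ei, Ei, coeff_mk, coeff_mk]
      have h1 : K+1+0-1 = K := by omega
      have h2 : K+0-1 ≤ K := by omega
      rw [h1, Nat.choose_zero_right, Nat.choose_zero_right, show K+1+0 = K+1 by omega,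
        show K+0 = K by omega, pow_succ]
      ring
  | succ i =>
      rw [coeff_succ_X_mul, Ei, Ei, coeff_mk, coeff_mk, coeff_mk]
      cases K with
      | zero =>
          have h3 : (0+(i+1)-1).choose (i+1) = 0 := Nat.choose_eq_zero_of_lt (by omega)
          rw [show 0+1+(i+1)-1 = i+1 by omega, show 0+1+i-1 = i by omega, h3,
            Nat.choose_self, Nat.choose_self]
          rw [show 0+1+(i+1) = i+2 by omega, show 0+1+i = i+1 by omega]
          push_cast
          rw [pow_succ ((1:ℚ)/2) (i+1), pow_succ ((-1:ℚ)) i, pow_succ ((1:ℚ)/2) i]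
          ring
      | succ K' =>
          rw [show K'+1+1+(i+1)-1 = (K'+1+i)+1 by omega, show K'+1+1+i-1 = K'+1+i by omega,
            show K'+1+(i+1)-1 = K'+1+i by omega, Nat.choose_succ_succ (K'+1+i) i]
          push_cast
          rw [show K'+1+1+(i+1) = (K'+1+i+1)+1 by omega, show K'+1+1+i = K'+1+i+1 by omega,
            show K'+1+(i+1) = K'+1+i+1 by omega]
          rw [pow_succ ((1:ℚ)/2) (K'+1+i+1), pow_succ ((-1:ℚ)) i]
          ring

lemma L12_pow_mul_Ei (k : ℕ) : (2 + X : Rq)^k * Ei k = 1 := by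
  induction k with
  | zero => rw [pow_zero, one_mul, Ei_zero]
  | succ n ih =>
      rw [pow_succ, show (2+X:Rq)^n * (2+X) * Ei (n+1) = (2+X:Rq)^n * ((2+X) * Ei (n+1)) by ring,
        L12_mul_Ei, ih]

lemma coeff_g_zero (K : ℕ) : coeff (R := ℚ) 0 ((1 + X : Rq) * Ei K) = (1/2)^K := by
  have hx : coeff (R := ℚ) 0 ((X:Rq) * Ei K) = 0 := by
    rw [coeff_zero_eq_constantCoeff, map_mul, constantCoeff_X, zero_mul]
  rw [show (1+X:Rq) * Ei K = 1 * Ei K + X * Ei K by ring, map_add, hx, add_zero, one_mul,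
    Ei, coeff_mk, Nat.choose_zero_right]
  norm_num

lemma coeff_g_succ (K i : ℕ) : coeff (R := ℚ) (i+1) ((1 + X : Rq) * Ei K)
    = (-1)^(i+1) * ((K+(i+1)-1).choose (i+1) : ℚ) * (1/2)^(K+(i+1))
      + (-1)^i * ((K+i-1).choose i : ℚ) * (1/2)^(K+i) := by
  rw [show (1+X:Rq) * Ei K = 1 * Ei K + X * Ei K by ring, map_add, one_mul, coeff_succ_X_mul,
    Ei, coeff_mk, coeff_mk]

lemma gchoose_half (a : ℕ) :
    ((a:ℚ)+1) * gchoose (1/2) (a+1) = (-1)^a * (1/2)^(2*a+1) * (Nat.centralBinom a : ℚ) := by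
  induction a with
  | zero =>
      have h := gchoose_mul_succ (1/2) 0
      rw [gchoose_zero] at h
      push_cast at h ⊢
      rw [show ((0:ℚ)+1) = 1 by norm_num] at h ⊢
      rw [h]
      norm_num [Nat.centralBinom]
  | succ b ih =>
      have h1 := gchoose_mul_succ (1/2) (b+1)
      have hcb := Nat.succ_mul_centralBinom_succ b
      have hcbq : ((b:ℚ)+1) * (Nat.centralBinom (b+1) : ℚ) = 2 * (2*(b:ℚ)+1) * (Nat.centralBinom b : ℚ) := by
        exact_mod_cast congrArg (Nat.cast : ℕ → ℚ) hcb
      have hne : ((b:ℚ)+1) ≠ 0 := by positivity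
      have hcast : (((b+1) : ℕ):ℚ) = (b:ℚ)+1 := by push_cast; ring
      rw [hcast]
      apply mul_left_cancel₀ hne
      push_cast at h1
      calc ((b:ℚ)+1) * (((b:ℚ)+1+1) * gchoose (1/2) (b+1+1))
          = ((b:ℚ)+1) * (gchoose (1/2) (b+1) * (1/2 - ((b:ℚ)+1))) := by rw [h1]
        _ = (((b:ℚ)+1) * gchoose (1/2) (b+1)) * (1/2 - ((b:ℚ)+1)) := by ring
        _ = ((-1)^b * (1/2)^(2*b+1) * (Nat.centralBinom b : ℚ)) * (1/2 - ((b:ℚ)+1)) := by rw [ih]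
        _ = ((b:ℚ)+1) * ((-1)^(b+1) * (1/2)^(2*(b+1)+1) * (Nat.centralBinom (b+1) : ℚ)) := by
            rw [show 2*(b+1)+1 = (2*b+1)+2 by omega, pow_add ((1:ℚ)/2) (2*b+1) 2, pow_succ ((-1:ℚ)) b]
            have expand : ((b:ℚ)+1) * ((-1)^b * (-1) * ((1/2)^(2*b+1) * (1/2)^2) * (Nat.centralBinom (b+1) : ℚ))
                = (-1)^b * (-1) * ((1/2)^(2*b+1) * (1/2)^2) * (((b:ℚ)+1) * (Nat.centralBinom (b+1) : ℚ)) := by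
              ring
            rw [expand, hcbq]
            ring
-- F3
lemma base0 (a : ℕ) : coeff (R := ℚ) a (1:Rq) = 2 * coeff (R := ℚ) a ((1 + X : Rq) * Ei (a+1)) := by
  cases a with
  | zero =>
      rw [coeff_g_zero, coeff_one]
      norm_num
  | succ i =>
      rw [coeff_one, if_neg (Nat.succ_ne_zero i), coeff_g_succ (i+2) i]
      rw [show i+2+(i+1)-1 = 2*i+2 by omega, show i+2+i-1 = 2*i+1 by omega,
        show i+2+(i+1) = 2*i+3 by omega, show i+2+i = 2*i+2 by omega]
      have hp : (2*i+2).choose (i+1) = 2 * ((2*i+1).choose i) := by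
        have h1 : (2*i+2).choose (i+1) = (2*i+1).choose i + (2*i+1).choose (i+1) :=
          Nat.choose_succ_succ (2*i+1) i
        have h2 : (2*i+1).choose (i+1) = (2*i+1).choose i := by
          have := Nat.choose_symm (n := 2*i+1) (k := i+1) (by omega)
          rw [show 2*i+1-(i+1) = i by omega] at this
          omega
        omega
      rw [hp]
      push_cast
      rw [pow_succ ((1:ℚ)/2) (2*i+2), pow_succ ((-1:ℚ)) i]
      ring
-- F4
lemma base1 (b : ℕ) : gchoose (1/2) (b+1) = 2 * coeff (R := ℚ) b ((1 + X : Rq) * Ei (b+2)) := by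
  have hne : ((b:ℚ)+1) ≠ 0 := by positivity
  apply mul_left_cancel₀ hne
  rw [gchoose_half b]
  cases b with
  | zero =>
      rw [coeff_g_zero]
      norm_num [Nat.centralBinom]
  | succ i =>
      rw [coeff_g_succ (i+3) i]
      rw [show i+3+(i+1)-1 = 2*i+3 by omega, show i+3+i-1 = 2*i+2 by omega,
        show i+3+(i+1) = 2*i+4 by omega, show i+3+i = 2*i+3 by omega]
      have hcb : (Nat.centralBinom (i+1) : ℚ) = ((2*i+2).choose (i+1) : ℚ) := by
        rw [Nat.centralBinom, show 2*(i+1) = 2*i+2 by omega]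
      have hp : (2*i+3).choose (i+1) = (2*i+2).choose i + (2*i+2).choose (i+1) :=
        Nat.choose_succ_succ (2*i+2) i
      have hq : ((2*i+2).choose (i+1) : ℚ) * ((i:ℚ)+1) = ((2*i+2).choose i : ℚ) * ((i:ℚ)+2) := by
        have := Nat.choose_succ_right_eq (2*i+2) i
        rw [show 2*i+2-i = i+2 by omega] at this
        exact_mod_cast congrArg (Nat.cast : ℕ → ℚ) this
      rw [hcb]
      have hpq : ((2*i+3).choose (i+1) : ℚ) = ((2*i+2).choose i : ℚ) + ((2*i+2).choose (i+1) : ℚ) := by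
        exact_mod_cast congrArg (Nat.cast : ℕ → ℚ) hp
      rw [hpq]
      rw [show 2*(i+1)+1 = 2*i+3 by omega, show 2*i+4 = (2*i+3)+1 by omega,
        show (2*i+3) = (2*i+2)+1 by omega]
      rw [pow_succ ((1:ℚ)/2) (2*i+2), pow_succ ((1:ℚ)/2) (2*i+2+1), pow_succ ((1:ℚ)/2) (2*i+2),
        pow_succ ((-1:ℚ)) i]
      push_cast
      push_cast at hq
      linear_combination ((-1:ℚ))^i * (1/2)^(2*i+2) * (1/2) * hq

-- gamma = delta
lemma gamma_delta (s : Rq) (hs2 : s*s + 2*s = X)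
    (hs1 : ∀ b : ℕ, coeff (R := ℚ) (b+1) s = gchoose (1/2) (b+1)) :
    ∀ n a : ℕ, n ≤ a → coeff (R := ℚ) a (s^n) = 2 * coeff (R := ℚ) (a-n) ((1 + X : Rq) * Ei (a+1)) := by
  intro n
  induction n using Nat.strong_induction_on with
  | _ n ih =>
    match n with
    | 0 =>
        intro a _
        rw [pow_zero, Nat.sub_zero]
        exact base0 a
    | 1 =>
        intro a ha
        obtain ⟨b, rfl⟩ : ∃ b, a = b + 1 := ⟨a - 1, by omega⟩
        rw [pow_one, hs1 b, Nat.add_sub_cancel]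
        exact base1 b
    | (k+2) =>
        intro a ha
        obtain ⟨a', rfl⟩ : ∃ a', a = a' + 1 := ⟨a - 1, by omega⟩
        have hpow : s^(k+2) = X * s^k - 2 * s^(k+1) := by
          linear_combination (s^k) * hs2
        rw [hpow, map_sub, coeff_succ_X_mul,
          show ((2:Rq) * s^(k+1)) = C (R := ℚ) 2 * s^(k+1) by rw [map_ofNat], coeff_C_mul]
        rw [ih k (by omega) a' (by omega), ih (k+1) (by omega) (a'+1) (by omega)]
        have hm1 : a' - k = (a'+1-(k+2)) + 1 := by omega
        have hm2 : a'+1-(k+1) = (a'+1-(k+2)) + 1 := by omega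
        set m := a'+1-(k+2) with hm
        rw [hm1, hm2]
        -- use L12_mul_Ei : Ei a' ... need (1+X) * Ei (a'+1)... relation at K := a'
        have hrel : (1 + X : Rq) * Ei (a'+1) = (2+X) * ((1+X) * Ei (a'+1+1)) := by
          rw [show (2+X:Rq) * ((1+X) * Ei (a'+1+1)) = (1+X) * ((2+X) * Ei (a'+1+1)) by ring,
            L12_mul_Ei (a'+1)]
        rw [hrel]
        have hsplit : coeff (R := ℚ) (m+1) ((2+X:Rq) * ((1+X) * Ei (a'+1+1)))
            = 2 * coeff (R := ℚ) (m+1) ((1+X:Rq) * Ei (a'+2)) + coeff (R := ℚ) m ((1+X:Rq) * Ei (a'+2)) := by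
          rw [show (2+X:Rq) * ((1+X) * Ei (a'+1+1)) = C (R := ℚ) 2 * ((1+X) * Ei (a'+2)) + X * ((1+X) * Ei (a'+2)) by
            rw [map_ofNat]; ring]
          rw [map_add, coeff_C_mul, coeff_succ_X_mul]
        rw [hsplit]
        ring

lemma bridge (α : ℕ) (hodd : Odd α) (hpos : 0 < α) :
    coeff (R := ℚ) α ((Bs (-1 - (α:ℚ)/2) + (C (R := ℚ) 3) * Bs (-((α:ℚ)+1)/2)) * (8 + 9*X)^α)
    = 2 * coeff (R := ℚ) α (((2 + 3*X : Rq)^α * (4 + 3*X)^(α+1)) *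
        ((((1:Rq) + X)^(α+1) * (2 + X)^(α+1)))⁻¹) := by
  have hC1 : (1 : Rq) = C (R := ℚ) 1 := (map_one _).symm
  have hC2 : (2 : Rq) = C (R := ℚ) 2 := (map_ofNat (C (R := ℚ)) 2).symm
  have hC3 : (3 : Rq) = C (R := ℚ) 3 := (map_ofNat (C (R := ℚ)) 3).symm
  have hC4 : (4 : Rq) = C (R := ℚ) 4 := (map_ofNat (C (R := ℚ)) 4).symm
  set w : Rq := Bs (1/2) with hw
  set s : Rq := w - 1 with hsdef
  have hw2 : w * w = 1 + X := by
    rw [hw, Bs_mul, show (1:ℚ)/2 + 1/2 = 1 by norm_num, Bs_one]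
  have hs2 : s*s + 2*s = X := by
    rw [hsdef]
    linear_combination hw2
  have hs1 : ∀ b : ℕ, coeff (R := ℚ) (b+1) s = gchoose (1/2) (b+1) := by
    intro b
    rw [hsdef, map_sub, coeff_Bs, coeff_one, if_neg (Nat.succ_ne_zero b), sub_zero]
  have hcw : constantCoeff (R := ℚ) w = 1 := by
    rw [hw, show constantCoeff (R := ℚ) (Bs (1/2)) = coeff (R := ℚ) 0 (Bs (1/2)) by
      rw [coeff_zero_eq_constantCoeff], coeff_Bs, gchoose_zero]
  -- T and its multiplicative identity
  set c1 : ℚ := -1 - (α:ℚ)/2 with hc1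
  set c2 : ℚ := -((α:ℚ)+1)/2 with hc2'
  set T : Rq := (Bs c1 + (C (R := ℚ) 3) * Bs c2) * (8 + 9*X)^α with hT
  have hBc1w : Bs c1 * w^(α+2) = 1 := by
    rw [hw, Bs_half_pow, Bs_mul, show c1 + (α+2 : ℕ)/2 = 0 by rw [hc1]; push_cast; ring, Bs_zero]
  have hBc2 : Bs c2 = Bs c1 * w := by
    rw [hw, Bs_mul, show c1 + 1/2 = c2 by rw [hc1, hc2']; ring]
  have hTw : T * w^(α+2) = (2 + 3*s)^α * (4 + 3*s)^(α+1) := by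
    have h89 : (8 + 9*X : Rq) = (2+3*s) * (4+3*s) := by
      rw [hsdef]
      linear_combination (-9:Rq) * hw2
    have hws : (1 : Rq) + 3*w = 4 + 3*s := by
      rw [hsdef]; ring
    calc T * w^(α+2)
        = (Bs c1 * w^(α+2)) * ((1 + 3*w) * (8+9*X)^α) := by
          rw [hT, hBc2, ← hC3]; ring
      _ = (1 + 3*w) * (8+9*X)^α := by rw [hBc1w, one_mul]
      _ = (4 + 3*s) * ((2+3*s) * (4+3*s))^α := by rw [h89, hws]
      _ = (2 + 3*s)^α * (4 + 3*s)^(α+1) := by rw [mul_pow, pow_succ]; ring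
  -- nilpotency
  have hwu : constantCoeff (R := ℚ) (w + 1) ≠ 0 := by
    rw [map_add, hcw, map_one]
    norm_num
  have hsw1 : s * (w + 1) = X := by
    rw [hsdef]
    linear_combination hw2
  have hsX : (X:Rq)^(α+1) ∣ s^(α+1) := by
    refine ⟨((w+1)⁻¹)^(α+1), ?_⟩
    have hinv : (w+1) * (w+1)⁻¹ = 1 := PowerSeries.mul_inv_cancel _ hwu
    rw [← hsw1, mul_pow, mul_assoc, ← mul_pow (w+1) (w+1)⁻¹, hinv, one_pow, mul_one]
  set z : Rq ⧸ Iq α := piq α s with hzdef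
  have hz : z^(α+1) = 0 := by
    rw [hzdef, ← map_pow, piq_eq_zero_iff]
    exact hsX
  -- h series
  have ccL11p : constantCoeff (R := ℚ) (((1:Rq)+X)^(α+2)) ≠ 0 := by
    rw [map_pow, map_add, map_one, constantCoeff_X, add_zero, one_pow]
    norm_num
  set hs : Rq := ((2 + 3*X : Rq)^α * (4 + 3*X)^(α+1)) * (((1:Rq)+X)^(α+2))⁻¹ with hhs
  have hQh : ((1:Rq)+X)^(α+2) * hs = (2 + 3*X : Rq)^α * (4 + 3*X)^(α+1) := by
    rw [hhs, show ((1:Rq)+X)^(α+2) * ((2 + 3*X : Rq)^α * (4 + 3*X)^(α+1) * (((1:Rq)+X)^(α+2))⁻¹)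
      = ((1:Rq)+X)^(α+2) * (((1:Rq)+X)^(α+2))⁻¹ * ((2 + 3*X : Rq)^α * (4 + 3*X)^(α+1)) by ring,
      PowerSeries.mul_inv_cancel _ ccL11p, one_mul]
  -- two evaluations
  have hev1 : ev α z ((C (R := ℚ) 1 + C (R := ℚ) 1 * X)^(α+2) * hs) = piq α (w^(α+2)) * ev α z hs := by
    rw [ev_linear_pow_mul α z hz 1 1 (α+2) hs]
    congr 1
    rw [hzdef, ← map_mul, ← map_add, ← map_pow]
    congr 1
    rw [← hC1, hsdef]
    ring
  have conv : ∀ a b : ℚ, piq α (C (R := ℚ) a) + piq α (C (R := ℚ) b) * z = piq α (C (R := ℚ) a + C (R := ℚ) b * s) := by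
    intro a b
    rw [hzdef, ← map_mul, ← map_add]
  have hev2 : ev α z ((C (R := ℚ) 2 + C (R := ℚ) 3 * X)^α * ((C (R := ℚ) 4 + C (R := ℚ) 3 * X)^(α+1) * 1))
      = piq α ((2 + 3*s)^α * (4 + 3*s)^(α+1)) := by
    rw [ev_linear_pow_mul α z hz 2 3 α _, ev_linear_pow_mul α z hz 4 3 (α+1) 1, ev_one, mul_one]
    rw [conv 2 3, conv 4 3, ← map_pow, ← map_pow, ← map_mul, ← hC2, ← hC3, ← hC4]
  have hargeq : (C (R := ℚ) 1 + C (R := ℚ) 1 * X)^(α+2) * hs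
      = (C (R := ℚ) 2 + C (R := ℚ) 3 * X)^α * ((C (R := ℚ) 4 + C (R := ℚ) 3 * X)^(α+1) * 1) := by
    rw [← hC1, ← hC2, ← hC3, ← hC4, mul_one, one_mul, hQh]
  have hkey : piq α (w^(α+2)) * ev α z hs = piq α (w^(α+2)) * piq α T := by
    rw [← hev1, hargeq, hev2, ← hTw, map_mul]
    ring
  have hwunit : IsUnit (piq α (w^(α+2))) := by
    apply IsUnit.of_mul_eq_one (piq α ((w^(α+2))⁻¹))
    rw [← map_mul, PowerSeries.mul_inv_cancel _ (by
      rw [map_pow, hcw, one_pow]; norm_num), map_one]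
  have hevT : ev α z hs = piq α T := hwunit.mul_left_cancel hkey
  -- coefficient transfer
  have hTH : (X:Rq)^(α+1) ∣ T - ∑ n ∈ Finset.range (α+1), C (R := ℚ) (coeff (R := ℚ) n hs) * s^n := by
    rw [← piq_eq_iff]
    rw [hzdef, ev_pi] at hevT
    exact hevT.symm
  obtain ⟨K, hK⟩ := hTH
  have hcoeffT : coeff (R := ℚ) α T = coeff (R := ℚ) α (∑ n ∈ Finset.range (α+1), C (R := ℚ) (coeff (R := ℚ) n hs) * s^n) := by
    have h0 : coeff (R := ℚ) α ((X:Rq)^(α+1) * K) = 0 := by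
      rw [coeff_X_pow_mul' K (α+1) α, if_neg (by omega)]
    have := congrArg (coeff (R := ℚ) α) hK
    rw [map_sub, h0] at this
    linarith
  rw [hcoeffT, map_sum]
  have hterm : ∀ n ∈ Finset.range (α+1),
      coeff (R := ℚ) α (C (R := ℚ) (coeff (R := ℚ) n hs) * s^n)
      = coeff (R := ℚ) n hs * (2 * coeff (R := ℚ) (α-n) ((1 + X : Rq) * Ei (α+1))) := by
    intro n hn
    rw [coeff_C_mul, gamma_delta s hs2 hs1 n α (by simp at hn; omega)]
  rw [Finset.sum_congr rfl hterm]
  -- sum to product coefficient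
  have hprod : ∑ n ∈ Finset.range (α+1), coeff (R := ℚ) n hs * (2 * coeff (R := ℚ) (α-n) ((1 + X : Rq) * Ei (α+1)))
      = 2 * coeff (R := ℚ) α (hs * ((1 + X : Rq) * Ei (α+1))) := by
    rw [coeff_mul,
      Finset.Nat.sum_antidiagonal_eq_sum_range_succ
        (f := fun i j => (coeff (R := ℚ) i) hs * (coeff (R := ℚ) j) ((1 + X : Rq) * Ei (α+1))) α,
      Finset.mul_sum]
    apply Finset.sum_congr rfl
    intro n _
    ring
  rw [hprod]
  -- identify hs * (1+X) * Ei = f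
  have hid : hs * ((1 + X : Rq) * Ei (α+1))
      = ((2 + 3*X : Rq)^α * (4 + 3*X)^(α+1)) * ((((1:Rq) + X)^(α+1) * (2 + X)^(α+1)))⁻¹ := by
    have hU : constantCoeff (R := ℚ) (((1:Rq) + X)^(α+1) * (2 + X)^(α+1)) ≠ 0 := by
      rw [map_mul, map_pow, map_pow, map_add, map_one, constantCoeff_X, add_zero, one_pow, map_add,
        constantCoeff_X, add_zero, one_mul, show constantCoeff (R := ℚ) (2:Rq) = 2 by
          rw [hC2, constantCoeff_C]]
      positivity
    have hUne : (((1:Rq) + X)^(α+1) * (2 + X)^(α+1)) ≠ 0 := by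
      intro h
      rw [h, map_zero] at hU
      exact hU rfl
    apply mul_left_cancel₀ hUne
    rw [show (((1:Rq) + X)^(α+1) * (2 + X)^(α+1)) *
        (((2 + 3*X : Rq)^α * (4 + 3*X)^(α+1)) * ((((1:Rq) + X)^(α+1) * (2 + X)^(α+1)))⁻¹)
      = ((((1:Rq) + X)^(α+1) * (2 + X)^(α+1)) * ((((1:Rq) + X)^(α+1) * (2 + X)^(α+1)))⁻¹)
        * ((2 + 3*X : Rq)^α * (4 + 3*X)^(α+1)) by ring,
      PowerSeries.mul_inv_cancel _ hU, one_mul]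
    calc (((1:Rq) + X)^(α+1) * (2 + X)^(α+1)) * (hs * ((1 + X : Rq) * Ei (α+1)))
        = (((1:Rq)+X)^(α+2) * hs) * ((2 + X : Rq)^(α+1) * Ei (α+1)) := by ring
      _ = (2 + 3*X : Rq)^α * (4 + 3*X)^(α+1) := by rw [hQh, L12_pow_mul_Ei, mul_one]
  rw [hid]

/-- For every odd positive `α`,
`∑_{i=0}^{α} C(α,i)(-1)^i [ C(i-1-α/2, α)·3^{2i} + C(i-(α+1)/2, α)·3^{2i+1} ] = 0`,
and this identity is equivalent to
`∑_i C(α,i)(-1)^i [ C(i+(α-1)/2, α)(1/3)^{2i} + C(i+α/2, α)(1/3)^{2i+1} ] = 0`. -/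
theorem identity_z_eq_three :
    (∀ α : ℕ, Odd α → 0 < α →
      ∑ i ∈ Finset.range (α + 1), (α.choose i : ℚ) * (-1) ^ i *
        (gchoose ((i : ℚ) - 1 - (α : ℚ) / 2) α * (3 : ℚ) ^ (2 * i) +
          gchoose ((i : ℚ) - ((α : ℚ) + 1) / 2) α * (3 : ℚ) ^ (2 * i + 1)) = 0) ∧
    (∀ α : ℕ, Odd α → 0 < α →
      ((∑ i ∈ Finset.range (α + 1), (α.choose i : ℚ) * (-1) ^ i *
        (gchoose ((i : ℚ) - 1 - (α : ℚ) / 2) α * (3 : ℚ) ^ (2 * i) +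
          gchoose ((i : ℚ) - ((α : ℚ) + 1) / 2) α * (3 : ℚ) ^ (2 * i + 1)) = 0) ↔
       (∑ i ∈ Finset.range (α + 1), (α.choose i : ℚ) * (-1) ^ i *
        (gchoose ((i : ℚ) + ((α : ℚ) - 1) / 2) α * (1 / 3 : ℚ) ^ (2 * i) +
          gchoose ((i : ℚ) + (α : ℚ) / 2) α * (1 / 3 : ℚ) ^ (2 * i + 1)) = 0))) := by
  have part1 : ∀ α : ℕ, Odd α → 0 < α →
      ∑ i ∈ Finset.range (α + 1), (α.choose i : ℚ) * (-1) ^ i *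
        (gchoose ((i : ℚ) - 1 - (α : ℚ) / 2) α * (3 : ℚ) ^ (2 * i) +
          gchoose ((i : ℚ) - ((α : ℚ) + 1) / 2) α * (3 : ℚ) ^ (2 * i + 1)) = 0 := by
    intro α hodd hpos
    rw [sum_eq_neg_coeff α hodd, bridge α hodd hpos, main_core α hodd hpos]
    ring
  refine ⟨part1, ?_⟩
  intro α hodd hpos
  have part2 : ∑ i ∈ Finset.range (α + 1), (α.choose i : ℚ) * (-1) ^ i *
        (gchoose ((i : ℚ) + ((α : ℚ) - 1) / 2) α * (1 / 3 : ℚ) ^ (2 * i) +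
          gchoose ((i : ℚ) + (α : ℚ) / 2) α * (1 / 3 : ℚ) ^ (2 * i + 1)) = 0 := by
    have h := sum_reflect α hodd
    rw [part1 α hodd hpos] at h
    have h3 : (3:ℚ)^(2*α+1) ≠ 0 := by positivity
    rcases mul_eq_zero.mp h.symm with hc | hc
    · exact absurd hc h3
    · exact hc
  exact iff_of_true (part1 α hodd hpos) part2
end

section
/- For every integer r, the identity ∑_{i=0}^{3} C(3,i)(-1)^i [ C(i + 1/2 + 3 - 2r, 3) z^{2i} + C(i + 4 - 2r, 3) z^{2i+1} ] = (1/(48))(1+z)·A_3(r,z) holds as polynomials in z over ℚ, where A_3(r,z) = (64r^3-576r^2+1712r-1680)z^6 + (48r^2-276r+393)z^5 + (-192r^3+1392r^2-3276r+2487)z^4 + (-96r^2+408r-408)z^3 + (192r^3-1056r^2+1848r-1032)z^2 + (48r^2-132r+87)z - 64r^3 + 240r^2 - 284r + 105. -/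
/-- `Θ(3) = (1/48)(1+z)·A₃(r,z)` with `A₃` the explicit degree-6 polynomial in `z`. -/
theorem theta_three_factorization (r : ℤ) (z : ℚ) :
    ∑ i ∈ Finset.range 4, ((Nat.choose 3 i : ℚ)) * (-1) ^ i *
      (gchoose ((i : ℚ) + 1 / 2 + 3 - 2 * (r : ℚ)) 3 * z ^ (2 * i) +
        gchoose ((i : ℚ) + 4 - 2 * (r : ℚ)) 3 * z ^ (2 * i + 1)) =
    (1 / 48 : ℚ) * (1 + z) *
      ((64 * (r:ℚ)^3 - 576 * (r:ℚ)^2 + 1712 * (r:ℚ) - 1680) * z ^ 6 +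
       (48 * (r:ℚ)^2 - 276 * (r:ℚ) + 393) * z ^ 5 +
       (-192 * (r:ℚ)^3 + 1392 * (r:ℚ)^2 - 3276 * (r:ℚ) + 2487) * z ^ 4 +
       (-96 * (r:ℚ)^2 + 408 * (r:ℚ) - 408) * z ^ 3 +
       (192 * (r:ℚ)^3 - 1056 * (r:ℚ)^2 + 1848 * (r:ℚ) - 1032) * z ^ 2 +
       (48 * (r:ℚ)^2 - 132 * (r:ℚ) + 87) * z +
       (-64 * (r:ℚ)^3 + 240 * (r:ℚ)^2 - 284 * (r:ℚ) + 105)) := by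
  have h : ∀ x : ℚ, gchoose x 3 = x*(x-1)*(x-2)/6 := by
    intro x
    simp only [gchoose, descPochhammer_succ_eval, descPochhammer_zero, Polynomial.eval_one]
    norm_num [Nat.factorial]
  simp only [Finset.sum_range_succ, Finset.sum_range_zero, h, Nat.choose]
  push_cast
  ring
end

section
/- Let p be an odd prime, l ≥ 1, and let u be an integer. For any integers r, k with r = kp^l + 3, the difference of binomial coefficients C(u - 3(p^l+1)/2, p^l) - C(u - r(p^l+1)/2, p^l) is congruent to k/2 modulo p (where 1/2 denotes the inverse of 2 mod p), provided the arguments differ by kp^l(p^l+1)/2 ≡ (k/2)p^l (mod p^{l+1}). -/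
open Finset

private lemma lucas_step (p : ℕ) [Fact p.Prime] (n k : ℕ) :
    ((n.choose k : ℤ) : ZMod p) =
      (((n % p).choose (k % p) * ((n / p).choose (k / p)) : ℤ) : ZMod p) := by
  rw [ZMod.intCast_eq_intCast_iff]
  exact_mod_cast Choose.choose_modEq_choose_mod_mul_choose_div

private lemma nat_choose_cpl_self (p : ℕ) (hp : p.Prime) :
    ∀ l c : ℕ, (((c * p ^ l).choose (p ^ l) : ℤ) : ZMod p) = (c : ZMod p) := by
  haveI : Fact p.Prime := ⟨hp⟩
  intro l
  induction l with
  | zero => intro c; simp [Nat.choose_one_right]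
  | succ l ih =>
    intro c
    have hp0 : 0 < p := hp.pos
    rw [lucas_step]
    have h1 : c * p ^ (l + 1) % p = 0 := by
      simp [pow_succ, ← mul_assoc, Nat.mul_mod_left]
    have h2 : p ^ (l + 1) % p = 0 := by
      simp [pow_succ, Nat.mul_mod_left]
    have h3 : c * p ^ (l + 1) / p = c * p ^ l := by
      rw [pow_succ, ← mul_assoc, Nat.mul_div_cancel _ hp0]
    have h4 : p ^ (l + 1) / p = p ^ l := by
      rw [pow_succ, Nat.mul_div_cancel _ hp0]
    rw [h1, h2, h3, h4]
    simpa using ih c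

private lemma nat_choose_cpl_mid (p : ℕ) (hp : p.Prime) :
    ∀ l c i : ℕ, 0 < i → i < p ^ l → (((c * p ^ l).choose i : ℤ) : ZMod p) = 0 := by
  haveI : Fact p.Prime := ⟨hp⟩
  intro l
  induction l with
  | zero => intro c i hi hi'; simp only [pow_zero] at hi'; omega
  | succ l ih =>
    intro c i hi hi'
    have hp0 : 0 < p := hp.pos
    rw [lucas_step]
    have h1 : c * p ^ (l + 1) % p = 0 := by
      simp [pow_succ, ← mul_assoc, Nat.mul_mod_left]
    have h3 : c * p ^ (l + 1) / p = c * p ^ l := by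
      rw [pow_succ, ← mul_assoc, Nat.mul_div_cancel _ hp0]
    rw [h1, h3]
    rcases Nat.eq_zero_or_pos (i % p) with h | h
    · have hd : p ∣ i := Nat.dvd_of_mod_eq_zero h
      have hip : 0 < i / p := Nat.div_pos (Nat.le_of_dvd hi hd) hp0
      have hip' : i / p < p ^ l := by
        rw [Nat.div_lt_iff_lt_mul hp0]
        calc i < p ^ (l + 1) := hi'
        _ = p ^ l * p := pow_succ p l
      have := ih c (i / p) hip hip'
      push_cast at this ⊢
      rw [this, mul_zero]
    · rw [Nat.choose_eq_zero_of_lt (by omega : (0 : ℕ) < i % p)]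
      push_cast
      ring

private lemma ring_choose_add_nat (m : ℤ) (N i : ℕ) :
    Ring.choose (m + (N : ℤ)) i =
      ∑ ij ∈ Finset.HasAntidiagonal.antidiagonal i, Ring.choose m ij.1 * (N.choose ij.2 : ℤ) := by
  rw [Ring.add_choose_eq i (Commute.all _ _)]
  refine Finset.sum_congr rfl fun ij _ => ?_
  rw [Ring.choose_natCast]

private lemma period_step (p : ℕ) (hp : p.Prime) (l : ℕ) (m : ℤ) (i : ℕ) (hi : i ≤ p ^ l) :
    ((Ring.choose (m + (p : ℤ) ^ (l + 1)) i : ℤ) : ZMod p) =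
      ((Ring.choose m i : ℤ) : ZMod p) := by
  have hN : ((p : ℤ) ^ (l + 1)) = ((p ^ (l + 1) : ℕ) : ℤ) := by push_cast; ring
  rw [hN, ring_choose_add_nat]
  push_cast
  rw [Finset.sum_eq_single_of_mem (i, 0) (by simp)]
  · simp
  · rintro ⟨a, b⟩ hab hne
    rw [Finset.HasAntidiagonal.mem_antidiagonal] at hab
    have hb : 0 < b := by
      rcases Nat.eq_zero_or_pos b with h | h
      · exact absurd (by simp [h, ← hab]) hne
      · exact h
    have hb' : b < p ^ (l + 1) := by
      have : b ≤ i := by omega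
      calc b ≤ p ^ l := le_trans this hi
      _ < p ^ (l + 1) := pow_lt_pow_right₀ hp.one_lt (by omega)
    have := nat_choose_cpl_mid p hp (l + 1) 1 b hb hb'
    rw [one_mul] at this
    push_cast at this
    rw [this, mul_zero]

private lemma period_general (p : ℕ) (hp : p.Prime) (l : ℕ) (i : ℕ) (hi : i ≤ p ^ l) (m : ℤ) :
    ∀ t : ℤ, ((Ring.choose (m + (p : ℤ) ^ (l + 1) * t) i : ℤ) : ZMod p) =
      ((Ring.choose m i : ℤ) : ZMod p) := by
  intro t
  induction t using Int.induction_on with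
  | zero => simp
  | succ n ih =>
    have : m + (p : ℤ) ^ (l + 1) * (n + 1) =
        (m + (p : ℤ) ^ (l + 1) * n) + (p : ℤ) ^ (l + 1) := by ring
    rw [this, period_step p hp l _ i hi, ih]
  | pred n ih =>
    have : m + (p : ℤ) ^ (l + 1) * (-n - 1) + (p : ℤ) ^ (l + 1) =
        m + (p : ℤ) ^ (l + 1) * (-n) := by ring
    rw [← ih, ← this, period_step p hp l _ i hi]

private lemma shift_nat (p : ℕ) (hp : p.Prime) (l : ℕ) (m : ℤ) (c : ℕ) :
    ((Ring.choose (m + ((c * p ^ l : ℕ) : ℤ)) (p ^ l) : ℤ) : ZMod p) =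
      ((Ring.choose m (p ^ l) : ℤ) : ZMod p) + (c : ZMod p) := by
  rw [ring_choose_add_nat]
  push_cast
  have hmem : ((p ^ l, 0) : ℕ × ℕ) ∈ Finset.HasAntidiagonal.antidiagonal (p ^ l) := by simp
  rw [← Finset.add_sum_erase _ _ hmem]
  have hpl : 0 < p ^ l := Nat.pow_pos hp.pos
  have hmem2 : ((0, p ^ l) : ℕ × ℕ) ∈ (Finset.HasAntidiagonal.antidiagonal (p ^ l)).erase (p ^ l, 0) := by
    rw [Finset.mem_erase]
    refine ⟨?_, by simp⟩
    simp only [ne_eq, Prod.mk.injEq, not_and]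
    intro h
    omega
  rw [← Finset.add_sum_erase _ _ hmem2]
  have hzero : ∑ ij ∈ ((Finset.HasAntidiagonal.antidiagonal (p ^ l)).erase (p ^ l, 0)).erase (0, p ^ l),
      ((Ring.choose m ij.1 : ℤ) : ZMod p) * (((c * p ^ l).choose ij.2 : ℕ) : ZMod p) = 0 := by
    refine Finset.sum_eq_zero ?_
    rintro ⟨a, b⟩ hab
    simp only [Finset.mem_erase, Finset.HasAntidiagonal.mem_antidiagonal, ne_eq, Prod.mk.injEq] at hab
    have hb0 : 0 < b := by
      rcases Nat.eq_zero_or_pos b with h | h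
      · exact absurd ⟨by omega, h⟩ hab.2.1
      · exact h
    have hbl : b < p ^ l := by
      rcases Nat.lt_or_ge b (p ^ l) with h | h
      · exact h
      · exact absurd ⟨by omega, by omega⟩ hab.1
    have := nat_choose_cpl_mid p hp l c b hb0 hbl
    push_cast at this
    rw [this, mul_zero]
  rw [hzero]
  have hself := nat_choose_cpl_self p hp l c
  push_cast at hself
  simp [hself, Ring.choose_zero_right]

private lemma shift_int (p : ℕ) (hp : p.Prime) (l : ℕ) (m c : ℤ) :
    ((Ring.choose (m + c * (p : ℤ) ^ l) (p ^ l) : ℤ) : ZMod p) =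
      ((Ring.choose m (p ^ l) : ℤ) : ZMod p) + (c : ZMod p) := by
  have hp0 : (0 : ℤ) < (p : ℤ) := Int.natCast_pos.mpr hp.pos
  set c₀ : ℕ := (c % p).toNat with hc₀
  have hc0 : (c₀ : ℤ) = c % p := Int.toNat_of_nonneg (Int.emod_nonneg c hp0.ne')
  have hdecomp : m + c * (p : ℤ) ^ l =
      (m + ((c₀ * p ^ l : ℕ) : ℤ)) + (p : ℤ) ^ (l + 1) * (c / p) := by
    push_cast
    rw [hc0]
    linear_combination ((p : ℤ) ^ l) * (Int.mul_ediv_add_emod c p).symm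
  rw [hdecomp, period_general p hp l (p ^ l) le_rfl, shift_nat p hp l m c₀]
  congr 1
  have : ((c₀ : ℤ) : ZMod p) = ((c % p : ℤ) : ZMod p) := by rw [hc0]
  push_cast at this
  exact this

/-- For `p` an odd prime, `l ≥ 1` and `r = k·p^l + 3`, the difference of binomial
coefficients `C(u - 3(p^l+1)/2, p^l) - C(u - r(p^l+1)/2, p^l)` is congruent to `k/2`
modulo `p` (where `1/2` is the inverse of `2` mod `p`). -/
theorem binom_difference_mod_p
    (p : ℕ) (hp : p.Prime) (hpodd : Odd p) (l : ℕ) (hl : 1 ≤ l)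
    (u r k : ℤ) (hr : r = k * (p : ℤ) ^ l + 3) :
    ((Ring.choose (u - 3 * (((p : ℤ) ^ l + 1) / 2)) (p ^ l) -
        Ring.choose (u - r * (((p : ℤ) ^ l + 1) / 2)) (p ^ l) : ℤ) : ZMod p) =
      (k : ZMod p) * (2 : ZMod p)⁻¹ := by
  haveI : Fact p.Prime := ⟨hp⟩
  set e : ℤ := ((p : ℤ) ^ l + 1) / 2 with he
  have hodd : Odd ((p : ℤ) ^ l) := by
    have : Odd (p ^ l) := hpodd.pow
    exact_mod_cast this
  have hdvd : (2 : ℤ) ∣ (p : ℤ) ^ l + 1 := (Int.even_add_one.mpr (Int.not_even_iff_odd.mpr hodd)).two_dvd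
  have h2e : 2 * e = (p : ℤ) ^ l + 1 := by
    rw [he, Int.mul_ediv_cancel' hdvd]
  have hm : u - 3 * e = (u - r * e) + (k * e) * (p : ℤ) ^ l := by
    rw [hr]; ring
  rw [hm, Int.cast_sub, shift_int p hp l (u - r * e) (k * e)]
  push_cast
  ring_nf
  have heinv : ((e : ℤ) : ZMod p) = (2 : ZMod p)⁻¹ := by
    have h1 : (2 : ZMod p) * ((e : ℤ) : ZMod p) = 1 := by
      have := congrArg (fun x : ℤ => (x : ZMod p)) h2e
      push_cast at this
      rw [this]
      simp [ZMod.natCast_self, zero_pow (by omega : l ≠ 0)]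
    exact eq_inv_of_mul_eq_one_left (by rw [mul_comm]; exact h1)
  rw [heinv]
end
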